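/- arXiv:2204.13288 — 7 statements merged into one kernel-verified Lean document; each statement's English description precedes it below -/
import Mathlib

section
/- Let n ≥ 1 and suppose g is C^∞ on an open neighborhood of (x̄₁, w̄) ∈ ℝ × ℝ^{n−1} with ∂₁²g(x̄₁,w̄) = 0 and ∂₁³g(x̄₁,w̄) ≠ 0. Then there exist an open neighborhood N of (x̄₁,w̄), an open neighborhood U₂ ∋ w̄ in ℝ^{n−1}, a C^∞ function f : U₂ → ℝ with f(w̄) = x̄₁ whose graph describes the singular set, i.e. {(x₁,w) ∈ N : ∂₁²g(x₁,w) = 0} = {(f(w), w) : w ∈ U₂} ∩ N, and C^∞ functions φ₁, φ₂ on N and k₁, k₂ on U₂ such that for all (x₁,w) ∈ N: P(x₁,w) = (x₁ − f(w))²·φ₁(x₁,w) + k₁(w) and Z(x₁,w) = (x₁ − f(w))²·φ₂(x₁,w) + k₂(w), with φ₁(x̄₁,w̄) ≠ 0. -/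
set_option maxHeartbeats 1000000
set_option synthInstance.maxHeartbeats 1000000
set_option linter.unusedSectionVars false
set_option linter.unusedVariables false

open Set MeasureTheory ContinuousLinearMap

/-!
Statement 1: the division step in the proof of Theorem 3.3 (Malgrange division,
quadratic form along the singular set).  Here `m` plays the role of `n - 1`,
`pd1` is the partial derivative in the first variable, `Pfun g = ∂g/∂x₁` and
`Zfun g = x₁ ∂g/∂x₁ - g`.
-/

/-- Partial derivative in the first variable. -/
noncomputable def pd1 {m : ℕ} (g : ℝ × (Fin m → ℝ) → ℝ) : ℝ × (Fin m → ℝ) → ℝ :=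
  fun q => deriv (fun t => g (t, q.2)) q.1

/-- The affine flat coordinate `p₁` of the m-wavefront. -/
noncomputable def Pfun {m : ℕ} (g : ℝ × (Fin m → ℝ) → ℝ) : ℝ × (Fin m → ℝ) → ℝ :=
  pd1 g

/-- The dual potential `z' = x₁ ∂g/∂x₁ - g` of the m-wavefront. -/
noncomputable def Zfun {m : ℕ} (g : ℝ × (Fin m → ℝ) → ℝ) : ℝ × (Fin m → ℝ) → ℝ :=
  fun q => q.1 * pd1 g q - g q

/-! ### Basic lemmas about `pd1` -/

section pd1lemmas
variable {m : ℕ} {W : Set (ℝ × (Fin m → ℝ))}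

lemma pd1_eq_fderiv {F : ℝ × (Fin m → ℝ) → ℝ} (hF : ContDiffOn ℝ (⊤ : ℕ∞) F W)
    (hW : IsOpen W) {q : ℝ × (Fin m → ℝ)} (hq : q ∈ W) :
    pd1 F q = fderiv ℝ F q (1, 0) := by
  have hdF : DifferentiableAt ℝ F q :=
    (hF.differentiableOn (by simp)).differentiableAt (hW.mem_nhds hq)
  have hline : HasDerivAt (fun t : ℝ => (t, q.2)) ((1 : ℝ), (0 : Fin m → ℝ)) q.1 :=
    (hasDerivAt_id q.1).prodMk (hasDerivAt_const _ _)
  have hd : HasDerivAt (fun t => F (t, q.2)) (fderiv ℝ F q (1, 0)) q.1 := by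
    have := hdF.hasFDerivAt.comp_hasDerivAt q.1 hline
    exact this
  exact hd.deriv

lemma hasDerivAt_pd1 {F : ℝ × (Fin m → ℝ) → ℝ} (hF : ContDiffOn ℝ (⊤ : ℕ∞) F W)
    (hW : IsOpen W) {q : ℝ × (Fin m → ℝ)} (hq : q ∈ W) :
    HasDerivAt (fun t => F (t, q.2)) (pd1 F q) q.1 := by
  have hdF : DifferentiableAt ℝ F q :=
    (hF.differentiableOn (by simp)).differentiableAt (hW.mem_nhds hq)
  have hline : HasDerivAt (fun t : ℝ => (t, q.2)) ((1 : ℝ), (0 : Fin m → ℝ)) q.1 :=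
    (hasDerivAt_id q.1).prodMk (hasDerivAt_const _ _)
  have hd : HasDerivAt (fun t => F (t, q.2)) (fderiv ℝ F q (1, 0)) q.1 := by
    have := hdF.hasFDerivAt.comp_hasDerivAt q.1 hline
    exact this
  rwa [pd1_eq_fderiv hF hW hq]

lemma pd1_contDiffOn {F : ℝ × (Fin m → ℝ) → ℝ} (hF : ContDiffOn ℝ (⊤ : ℕ∞) F W)
    (hW : IsOpen W) : ContDiffOn ℝ (⊤ : ℕ∞) (pd1 F) W := by
  have h1 : ContDiffOn ℝ (⊤ : ℕ∞) (fderiv ℝ F) W :=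
    hF.fderiv_of_isOpen hW (by exact_mod_cast le_top)
  have h2 : ContDiffOn ℝ (⊤ : ℕ∞) (fun q => fderiv ℝ F q (1, 0)) W :=
    (ContinuousLinearMap.apply ℝ ℝ ((1 : ℝ), (0 : Fin m → ℝ))).contDiff.comp_contDiffOn h1
  exact h2.congr fun q hq => pd1_eq_fderiv hF hW hq

lemma pd1_Zfun {g : ℝ × (Fin m → ℝ) → ℝ} (hg : ContDiffOn ℝ (⊤ : ℕ∞) g W)
    (hW : IsOpen W) {q : ℝ × (Fin m → ℝ)} (hq : q ∈ W) :
    pd1 (Zfun g) q = q.1 * pd1 (pd1 g) q := by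
  have h1 := hasDerivAt_pd1 hg hW hq
  have h2 := hasDerivAt_pd1 (pd1_contDiffOn hg hW) hW hq
  have hmul : HasDerivAt (fun t => t * pd1 g (t, q.2))
      (1 * pd1 g q + q.1 * pd1 (pd1 g) q) q.1 := by
    have := (hasDerivAt_id q.1).mul h2
    exact this
  have hZ : HasDerivAt (fun t => Zfun g (t, q.2))
      (1 * pd1 g q + q.1 * pd1 (pd1 g) q - pd1 g q) q.1 := by
    have := hmul.sub h1
    exact this
  have := hZ.deriv
  rw [show pd1 (Zfun g) q = deriv (fun t => Zfun g (t, q.2)) q.1 from rfl, this]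
  ring

end pd1lemmas

/-! ### Linear algebra: the triangular continuous linear equivalence -/

section linalg
variable {m : ℕ}

lemma L_expand (L : (ℝ × (Fin m → ℝ)) →L[ℝ] ℝ) (u : ℝ) (v : Fin m → ℝ) :
    L (u, v) = u * L (1, 0) + L (0, v) := by
  have : (u, v) = u • ((1 : ℝ), (0 : Fin m → ℝ)) + ((0 : ℝ), v) := by
    simp [Prod.ext_iff]
  rw [this, map_add, _root_.map_smul]; simp [smul_eq_mul]

noncomputable def mkT (L : (ℝ × (Fin m → ℝ)) →L[ℝ] ℝ) (ha : L (1, 0) ≠ 0) :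
    (ℝ × (Fin m → ℝ)) ≃L[ℝ] (ℝ × (Fin m → ℝ)) :=
  ContinuousLinearEquiv.equivOfInverse
    (L.prod (snd ℝ ℝ (Fin m → ℝ)))
    ((((L (1, 0))⁻¹) • ((fst ℝ ℝ (Fin m → ℝ)) -
        L.comp ((inr ℝ ℝ (Fin m → ℝ)).comp (snd ℝ ℝ (Fin m → ℝ))))).prod
      (snd ℝ ℝ (Fin m → ℝ)))
    (by
      rintro ⟨u, v⟩
      have h := L_expand L u v
      simp [Prod.ext_iff, h]
      field_simp)
    (by
      rintro ⟨u, v⟩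
      have h := L_expand L (((L (1, 0))⁻¹) * (u - L (0, v))) v
      simp [Prod.ext_iff, h]
      field_simp; ring)

lemma mkT_coe (L : (ℝ × (Fin m → ℝ)) →L[ℝ] ℝ) (ha : L (1, 0) ≠ 0) :
    (mkT L ha : (ℝ × (Fin m → ℝ)) →L[ℝ] (ℝ × (Fin m → ℝ))) = L.prod (snd ℝ ℝ (Fin m → ℝ)) := rfl

end linalg

/-! ### The implicit function theorem block -/

section ift
variable {m : ℕ} {W : Set (ℝ × (Fin m → ℝ))}

lemma ift_block {h : ℝ × (Fin m → ℝ) → ℝ} (hh : ContDiffOn ℝ (⊤ : ℕ∞) h W)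
    (hW : IsOpen W) {xb : ℝ} {wb : Fin m → ℝ} (hq0 : (xb, wb) ∈ W)
    (h0 : h (xb, wb) = 0) (ha : pd1 h (xb, wb) ≠ 0) :
    ∃ (f : (Fin m → ℝ) → ℝ) (U₂ : Set (Fin m → ℝ)) (S : Set (ℝ × (Fin m → ℝ))),
      IsOpen U₂ ∧ wb ∈ U₂ ∧ ContDiffOn ℝ (⊤ : ℕ∞) f U₂ ∧ f wb = xb ∧
      IsOpen S ∧ (xb, wb) ∈ S ∧ S ⊆ W ∧
      (∀ w ∈ U₂, (f w, w) ∈ W ∧ h (f w, w) = 0) ∧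
      (∀ q ∈ S, h q = 0 → q.1 = f q.2) := by
  classical
  set q0 : ℝ × (Fin m → ℝ) := (xb, wb) with hq0def
  have hone : (1 : WithTop ℕ∞) ≤ ((⊤ : ℕ∞) : WithTop ℕ∞) := by exact_mod_cast le_top
  have hpd1cont : ContinuousOn (pd1 h) W := (pd1_contDiffOn hh hW).continuousOn
  set O₁ : Set (ℝ × (Fin m → ℝ)) := W ∩ (pd1 h) ⁻¹' {0}ᶜ with hO₁def
  have hO₁open : IsOpen O₁ := hpd1cont.isOpen_inter_preimage hW isOpen_compl_singleton
  have hq0O₁ : q0 ∈ O₁ := ⟨hq0, by simpa using ha⟩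
  have hO₁W : O₁ ⊆ W := inter_subset_left
  set Φ : ℝ × (Fin m → ℝ) → ℝ × (Fin m → ℝ) := fun q => (h q, q.2) with hΦdef
  have hΦsmooth : ∀ q ∈ W, ContDiffAt ℝ (⊤ : ℕ∞) Φ q := fun q hq =>
    ((hh.contDiffAt (hW.mem_nhds hq)).prodMk contDiffAt_snd)
  have hΦderiv : ∀ q ∈ O₁, ∃ T : (ℝ × (Fin m → ℝ)) ≃L[ℝ] (ℝ × (Fin m → ℝ)),
      HasFDerivAt Φ (T : (ℝ × (Fin m → ℝ)) →L[ℝ] (ℝ × (Fin m → ℝ))) q := by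
    intro q hq
    have hdh : DifferentiableAt ℝ h q :=
      (hh.differentiableOn (by simp)).differentiableAt
        (hW.mem_nhds (hO₁W hq))
    have hLa : (fderiv ℝ h q) (1, 0) ≠ 0 := by
      rw [← pd1_eq_fderiv hh hW (hO₁W hq)]
      simpa [hO₁def] using hq.2
    refine ⟨mkT (fderiv ℝ h q) hLa, ?_⟩
    rw [mkT_coe]
    exact hdh.hasFDerivAt.prodMk (hasFDerivAt_snd)
  obtain ⟨T0, hT0⟩ := hΦderiv q0 hq0O₁
  set PH : OpenPartialHomeomorph (ℝ × (Fin m → ℝ)) (ℝ × (Fin m → ℝ)) :=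
    (hΦsmooth q0 hq0).toOpenPartialHomeomorph Φ hT0 (by simp) with hPHdef
  have hPHcoe : (PH : ℝ × (Fin m → ℝ) → ℝ × (Fin m → ℝ)) = Φ := rfl
  have hq0src : q0 ∈ PH.source :=
    (hΦsmooth q0 hq0).mem_toOpenPartialHomeomorph_source hT0 (by simp)
  have hΦq0 : Φ q0 = ((0 : ℝ), wb) := by rw [hΦdef]; exact Prod.ext h0 rfl
  set V : Set (ℝ × (Fin m → ℝ)) := PH.target ∩ (PH.symm) ⁻¹' O₁ with hVdef
  have hVopen : IsOpen V := PH.symm.isOpen_inter_preimage hO₁open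
  have h0wbV : ((0 : ℝ), wb) ∈ V := by
    have htgt : Φ q0 ∈ PH.target := by
      rw [← hPHcoe]; exact PH.map_source hq0src
    have hsymm : PH.symm (Φ q0) = q0 := by
      rw [← hPHcoe]; exact PH.left_inv hq0src
    constructor
    · rwa [← hΦq0]
    · show PH.symm ((0 : ℝ), wb) ∈ O₁
      rw [← hΦq0, hsymm]; exact hq0O₁
  have hΨ : ∀ y ∈ V, ContDiffAt ℝ (⊤ : ℕ∞) (PH.symm) y := by
    intro y hy
    obtain ⟨T, hT⟩ := hΦderiv (PH.symm y) hy.2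
    refine PH.contDiffAt_symm (f₀' := T) hy.1 ?_ ?_
    · rw [hPHcoe]; exact hT
    · rw [hPHcoe]; exact hΦsmooth _ (hO₁W hy.2)
  have hΨon : ContDiffOn ℝ (⊤ : ℕ∞) (PH.symm) V := fun y hy => (hΨ y hy).contDiffWithinAt
  set f : (Fin m → ℝ) → ℝ := fun w => (PH.symm ((0 : ℝ), w)).1 with hfdef
  set U₂ : Set (Fin m → ℝ) := (fun w => ((0 : ℝ), w)) ⁻¹' V with hU₂def
  have hU₂open : IsOpen U₂ := hVopen.preimage (continuous_const.prodMk continuous_id)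
  have hwbU₂ : wb ∈ U₂ := h0wbV
  have hΨf : ∀ w ∈ U₂, PH.symm ((0 : ℝ), w) = (f w, w) ∧ (f w, w) ∈ O₁ ∧ h (f w, w) = 0 := by
    intro w hw
    have htgt : ((0 : ℝ), w) ∈ PH.target := hw.1
    have hr : Φ (PH.symm ((0 : ℝ), w)) = ((0 : ℝ), w) := by
      rw [← hPHcoe]; exact PH.right_inv htgt
    have h2 : (PH.symm ((0 : ℝ), w)).2 = w := congrArg Prod.snd hr
    have h1 : h (PH.symm ((0 : ℝ), w)) = 0 := congrArg Prod.fst hr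
    have heq : PH.symm ((0 : ℝ), w) = (f w, w) := by
      rw [hfdef]; exact Prod.ext rfl h2
    refine ⟨heq, ?_, ?_⟩
    · rw [← heq]; exact hw.2
    · rw [← heq]; exact h1
  have hfc : ContDiffOn ℝ (⊤ : ℕ∞) f U₂ := by
    have hcomp : ContDiffOn ℝ (⊤ : ℕ∞) (fun w => PH.symm ((0 : ℝ), w)) U₂ := by
      refine hΨon.comp ?_ ?_
      · exact (contDiff_const.prodMk contDiff_id).contDiffOn
      · intro w hw; exact hw
    exact contDiff_fst.comp_contDiffOn hcomp
  have hsymm0 : PH.symm ((0 : ℝ), wb) = q0 := by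
    have : PH.symm (Φ q0) = q0 := by rw [← hPHcoe]; exact PH.left_inv hq0src
    rwa [hΦq0] at this
  have hfwb : f wb = xb := by rw [hfdef]; simp only; rw [hsymm0]
  refine ⟨f, U₂, PH.source ∩ O₁, hU₂open, hwbU₂, hfc, hfwb,
    PH.open_source.inter hO₁open, ⟨hq0src, hq0O₁⟩, fun q hq => hO₁W hq.2, ?_, ?_⟩
  · intro w hw
    obtain ⟨_, hmem, hzero⟩ := hΨf w hw
    exact ⟨hO₁W hmem, hzero⟩
  · rintro q ⟨hqsrc, _⟩ hq0'
    have hΦq : Φ q = ((0 : ℝ), q.2) := by simp [hΦdef, hq0']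
    have : PH.symm ((0 : ℝ), q.2) = q := by
      rw [← hΦq, ← hPHcoe]; exact PH.left_inv hqsrc
    rw [hfdef]; simp only; rw [this]

end ift

/-! ### Smoothness of parametric integrals -/

/-- The fixed parameter interval. -/
def Jint : Set ℝ := Set.Ioo (-1 : ℝ) 2

lemma isOpen_Jint : IsOpen Jint := isOpen_Ioo

lemma Icc_subset_Jint : Icc (0:ℝ) 1 ⊆ Jint := fun t ht => ⟨by linarith [ht.1], by linarith [ht.2]⟩

section paramint
variable {H : Type} [NormedAddCommGroup H] [NormedSpace ℝ H] [ProperSpace H]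

/-- Partial derivative in the second (parameter) variable of a kernel. -/
noncomputable def DK {F : Type} [NormedAddCommGroup F] [NormedSpace ℝ F]
    (K : ℝ → H → F) : ℝ → H → (H →L[ℝ] F) :=
  fun t x => (fderiv ℝ (fun p : ℝ × H => K p.1 p.2) (t, x)).comp (ContinuousLinearMap.inr ℝ ℝ H)

section key
variable {F : Type} [NormedAddCommGroup F] [NormedSpace ℝ F] [CompleteSpace F]
  {O : Set H} (hO : IsOpen O) {K : ℝ → H → F}
  (hK : ContDiffOn ℝ (⊤ : ℕ∞) (fun p : ℝ × H => K p.1 p.2) (Jint ×ˢ O))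
include hO hK

lemma DK_hasFDerivAt {t : ℝ} {x : H} (ht : t ∈ Jint) (hx : x ∈ O) :
    HasFDerivAt (fun y => K t y) (DK K t x) x := by
  have hopen : IsOpen (Jint ×ˢ O) := isOpen_Jint.prod hO
  have hd : DifferentiableAt ℝ (fun p : ℝ × H => K p.1 p.2) (t, x) :=
    (hK.differentiableOn (by simp)).differentiableAt
      (hopen.mem_nhds ⟨ht, hx⟩)
  have := hd.hasFDerivAt.comp x (hasFDerivAt_prodMk_right t x)
  exact this

lemma DK_continuousOn :
    ContinuousOn (fun p : ℝ × H => DK K p.1 p.2) (Jint ×ˢ O) := by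
  have hopen : IsOpen (Jint ×ˢ O) := isOpen_Jint.prod hO
  have h1 : ContinuousOn (fderiv ℝ (fun p : ℝ × H => K p.1 p.2)) (Jint ×ˢ O) :=
    hK.continuousOn_fderiv_of_isOpen hopen (by exact_mod_cast le_top)
  have h2 := (((ContinuousLinearMap.compL ℝ H (ℝ × H) F).flip
      (ContinuousLinearMap.inr ℝ ℝ H)).continuous).comp_continuousOn h1
  exact h2

lemma DK_contDiffOn :
    ContDiffOn ℝ (⊤ : ℕ∞) (fun p : ℝ × H => DK K p.1 p.2) (Jint ×ˢ O) := by
  have hopen : IsOpen (Jint ×ˢ O) := isOpen_Jint.prod hO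
  have h1 : ContDiffOn ℝ (⊤ : ℕ∞) (fderiv ℝ (fun p : ℝ × H => K p.1 p.2)) (Jint ×ˢ O) :=
    hK.fderiv_of_isOpen hopen (by exact_mod_cast le_top)
  exact (((ContinuousLinearMap.compL ℝ H (ℝ × H) F).flip
      (ContinuousLinearMap.inr ℝ ℝ H)).contDiff).comp_contDiffOn h1

lemma keyDeriv {x₀ : H} (hx₀ : x₀ ∈ O) :
    HasFDerivAt (fun x => ∫ t in (0:ℝ)..1, K t x) (∫ t in (0:ℝ)..1, DK K t x₀) x₀ := by
  obtain ⟨ε, hε, hball⟩ := Metric.isOpen_iff.1 hO x₀ hx₀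
  set ε' : ℝ := ε / 2 with hε'
  have hε'pos : 0 < ε' := by positivity
  have hcb : Metric.closedBall x₀ ε' ⊆ O := fun y hy =>
    hball (Metric.mem_ball.2 (lt_of_le_of_lt (Metric.mem_closedBall.1 hy) (by linarith)))
  have hcompact : IsCompact (Icc (0:ℝ) 1 ×ˢ Metric.closedBall x₀ ε') :=
    isCompact_Icc.prod (isCompact_closedBall _ _)
  have hsub : Icc (0:ℝ) 1 ×ˢ Metric.closedBall x₀ ε' ⊆ Jint ×ˢ O := fun p hp =>
    ⟨Icc_subset_Jint hp.1, hcb hp.2⟩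
  obtain ⟨C, hC⟩ := hcompact.exists_bound_of_continuousOn ((DK_continuousOn hO hK).mono hsub)
  have huIoc : Set.uIoc (0:ℝ) 1 ⊆ Icc (0:ℝ) 1 := by
    rw [uIoc_of_le (by norm_num : (0:ℝ) ≤ 1)]; exact Ioc_subset_Icc_self
  have hcontslice : ∀ x ∈ O, ContinuousOn (fun t => K t x) (Icc (0:ℝ) 1) := by
    intro x hx
    have : ContinuousOn (fun t : ℝ => ((t, x) : ℝ × H)) (Icc (0:ℝ) 1) :=
      (continuous_id.prodMk continuous_const).continuousOn
    exact (hK.continuousOn.comp this (fun t ht => ⟨Icc_subset_Jint ht, hx⟩))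
  have hmain := intervalIntegral.hasFDerivAt_integral_of_dominated_of_fderiv_le
    (F := fun x t => K t x) (F' := fun x t => DK K t x) (x₀ := x₀)
    (a := (0:ℝ)) (b := 1) (μ := volume) (bound := fun _ => C) (Metric.ball_mem_nhds x₀ hε'pos)
    ?_ ?_ ?_ ?_ ?_ ?_
  · exact hmain
  · filter_upwards [hO.mem_nhds hx₀] with x hx
    exact ((hcontslice x hx).mono huIoc).aestronglyMeasurable measurableSet_uIoc
  · exact ((hcontslice x₀ hx₀).mono
      (by rw [uIcc_of_le (by norm_num : (0:ℝ) ≤ 1)])).intervalIntegrable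
  · have : ContinuousOn (fun t => DK K t x₀) (Icc (0:ℝ) 1) := by
      have hline : ContinuousOn (fun t : ℝ => ((t, x₀) : ℝ × H)) (Icc (0:ℝ) 1) :=
        (continuous_id.prodMk continuous_const).continuousOn
      exact (DK_continuousOn hO hK).comp hline (fun t ht => ⟨Icc_subset_Jint ht, hx₀⟩)
    exact (this.mono huIoc).aestronglyMeasurable measurableSet_uIoc
  · refine Filter.Eventually.of_forall (fun t => fun ht x hx => ?_)
    exact hC (t, x) ⟨huIoc ht, (Metric.ball_subset_closedBall hx)⟩
  · exact intervalIntegrable_const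
  · refine Filter.Eventually.of_forall (fun t => fun ht x hx => ?_)
    exact DK_hasFDerivAt hO hK (Icc_subset_Jint (huIoc ht))
      (hcb (Metric.ball_subset_closedBall hx))

end key

lemma paramIntegral_contDiffOn_nat {O : Set H} (hO : IsOpen O) (n : ℕ) :
    ∀ (F : Type) [NormedAddCommGroup F] [NormedSpace ℝ F] [CompleteSpace F] (K : ℝ → H → F),
      ContDiffOn ℝ (⊤ : ℕ∞) (fun p : ℝ × H => K p.1 p.2) (Jint ×ˢ O) →
      ContDiffOn ℝ (n : ℕ) (fun x => ∫ t in (0:ℝ)..1, K t x) O := by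
  induction n with
  | zero =>
    intro F _ _ _ K hK
    rw [Nat.cast_zero, contDiffOn_zero]
    intro x hx
    exact ((keyDeriv hO hK hx).differentiableAt.continuousAt).continuousWithinAt
  | succ n ih =>
    intro F _ _ _ K hK
    have hcast : ((n + 1 : ℕ) : WithTop ℕ∞) = (n : WithTop ℕ∞) + 1 := by push_cast; ring
    rw [hcast, contDiffOn_succ_iff_fderiv_of_isOpen hO]
    refine ⟨?_, ?_, ?_⟩
    · intro x hx
      exact (keyDeriv hO hK hx).differentiableAt.differentiableWithinAt
    · intro habs
      exact absurd habs (WithTop.natCast_ne_top n)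
    · have hsm := DK_contDiffOn hO hK
      have := ih (H →L[ℝ] F) (DK K) hsm
      refine this.congr (fun x hx => ?_)
      exact (keyDeriv hO hK hx).fderiv

/-- Smoothness of a parametric interval integral. -/
lemma paramIntegral_contDiffOn {O : Set H} (hO : IsOpen O)
    {F : Type} [NormedAddCommGroup F] [NormedSpace ℝ F] [CompleteSpace F]
    {K : ℝ → H → F} (hK : ContDiffOn ℝ (⊤ : ℕ∞) (fun p : ℝ × H => K p.1 p.2) (Jint ×ˢ O)) :
    ContDiffOn ℝ (⊤ : ℕ∞) (fun x => ∫ t in (0:ℝ)..1, K t x) O := by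
  rw [contDiffOn_infty]
  intro n
  exact paramIntegral_contDiffOn_nat hO n F K hK

end paramint

/-! ### Taylor formula with integral remainder -/

lemma taylor2 (v v' v'' : ℝ → ℝ)
    (hd1 : ∀ t ∈ Icc (0:ℝ) 1, HasDerivAt v (v' t) t)
    (hd2 : ∀ t ∈ Icc (0:ℝ) 1, HasDerivAt v' (v'' t) t)
    (hc : ContinuousOn v'' (Icc (0:ℝ) 1)) :
    ∫ t in (0:ℝ)..1, (1 - t) * v'' t = v 1 - v 0 - v' 0 := by
  have huIcc : uIcc (0:ℝ) 1 = Icc (0:ℝ) 1 := uIcc_of_le (by norm_num)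
  have hG : ∀ t ∈ uIcc (0:ℝ) 1,
      HasDerivAt (fun s => v s + (1 - s) * v' s) ((1 - t) * v'' t) t := by
    intro t ht
    rw [huIcc] at ht
    have h1 := hd1 t ht
    have h2 : HasDerivAt (fun s => (1 - s) * v' s)
        ((-1) * v' t + (1 - t) * v'' t) t := by
      have ha : HasDerivAt (fun s : ℝ => 1 - s) (-1) t := by
        simpa using (hasDerivAt_id t).const_sub 1
      exact ha.mul (hd2 t ht)
    have := h1.add h2
    exact this.congr_deriv (by ring)
  have hint : IntervalIntegrable (fun t => (1 - t) * v'' t) volume 0 1 := by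
    apply ContinuousOn.intervalIntegrable
    rw [huIcc]
    exact (continuous_const.sub continuous_id).continuousOn.mul hc
  have := intervalIntegral.integral_eq_sub_of_hasDerivAt hG hint
  rw [this]; ring

/-! ### The division lemma -/

section division
variable {m : ℕ} {W : Set (ℝ × (Fin m → ℝ))}

lemma division_lemma {F : ℝ × (Fin m → ℝ) → ℝ} (hF : ContDiffOn ℝ (⊤ : ℕ∞) F W)
    (hW : IsOpen W) {f : (Fin m → ℝ) → ℝ} {U₂ : Set (Fin m → ℝ)}
    (hf : ContDiffOn ℝ (⊤ : ℕ∞) f U₂)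
    {N' : Set (ℝ × (Fin m → ℝ))} (hN'open : IsOpen N')
    (hNsub : ∀ q ∈ N', q.2 ∈ U₂)
    (seg : ∀ q ∈ N', ∀ t ∈ Jint, (f q.2 + t * (q.1 - f q.2), q.2) ∈ W)
    (hlin : ∀ q ∈ N', pd1 F (f q.2, q.2) = 0) :
    ContDiffOn ℝ (⊤ : ℕ∞)
      (fun q : ℝ × (Fin m → ℝ) =>
        ∫ t in (0:ℝ)..1, (1 - t) * pd1 (pd1 F) (f q.2 + t * (q.1 - f q.2), q.2)) N' ∧
    ∀ q ∈ N', F q = (q.1 - f q.2) ^ 2 *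
        (∫ t in (0:ℝ)..1, (1 - t) * pd1 (pd1 F) (f q.2 + t * (q.1 - f q.2), q.2))
      + F (f q.2, q.2) := by
  have hF1 : ContDiffOn ℝ (⊤ : ℕ∞) (pd1 F) W := pd1_contDiffOn hF hW
  have hF2 : ContDiffOn ℝ (⊤ : ℕ∞) (pd1 (pd1 F)) W := pd1_contDiffOn hF1 hW
  set σ : ℝ × (ℝ × (Fin m → ℝ)) → ℝ × (Fin m → ℝ) :=
    fun p => (f p.2.2 + p.1 * (p.2.1 - f p.2.2), p.2.2) with hσdef
  have hσmaps : ∀ p ∈ Jint ×ˢ N', σ p ∈ W := by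
    rintro ⟨t, q⟩ ⟨ht, hq⟩
    exact seg q hq t ht
  have hσsmooth : ContDiffOn ℝ (⊤ : ℕ∞) σ (Jint ×ˢ N') := by
    have hsnd2 : ContDiffOn ℝ (⊤ : ℕ∞) (fun p : ℝ × (ℝ × (Fin m → ℝ)) => p.2.2) (Jint ×ˢ N') :=
      (contDiff_snd.comp contDiff_snd).contDiffOn
    have hfc : ContDiffOn ℝ (⊤ : ℕ∞) (fun p : ℝ × (ℝ × (Fin m → ℝ)) => f p.2.2) (Jint ×ˢ N') :=
      hf.comp hsnd2 (fun p hp => hNsub _ hp.2)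
    have hfirst : ContDiffOn ℝ (⊤ : ℕ∞)
        (fun p : ℝ × (ℝ × (Fin m → ℝ)) => f p.2.2 + p.1 * (p.2.1 - f p.2.2)) (Jint ×ˢ N') := by
      refine hfc.add (contDiff_fst.contDiffOn.mul ?_)
      exact ((contDiff_fst.comp contDiff_snd).contDiffOn.sub hfc)
    exact hfirst.prodMk hsnd2
  have hKsmooth : ContDiffOn ℝ (⊤ : ℕ∞)
      (fun p : ℝ × (ℝ × (Fin m → ℝ)) => (1 - p.1) * pd1 (pd1 F) (σ p)) (Jint ×ˢ N') := by
    refine ContDiffOn.mul ?_ (hF2.comp hσsmooth hσmaps)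
    exact (contDiff_const.sub contDiff_fst).contDiffOn
  constructor
  · exact paramIntegral_contDiffOn hN'open
      (K := fun t q => (1 - t) * pd1 (pd1 F) (f q.2 + t * (q.1 - f q.2), q.2)) hKsmooth
  · rintro q hq
    set c := f q.2 with hcdef
    set y := q.1 - c with hydef
    set w := q.2 with hwdef
    have hseg' : ∀ t ∈ Icc (0:ℝ) 1, (c + t * y, w) ∈ W := fun t ht =>
      seg q hq t (Icc_subset_Jint ht)
    have haff : ∀ t : ℝ, HasDerivAt (fun s : ℝ => c + s * y) y t := by
      intro t
      exact (((hasDerivAt_id t).mul_const y).const_add c).congr_deriv (by ring)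
    set v : ℝ → ℝ := fun t => F (c + t * y, w) with hvdef
    set v' : ℝ → ℝ := fun t => pd1 F (c + t * y, w) * y with hv'def
    set v'' : ℝ → ℝ := fun t => pd1 (pd1 F) (c + t * y, w) * y * y with hv''def
    have hd1 : ∀ t ∈ Icc (0:ℝ) 1, HasDerivAt v (v' t) t := by
      intro t ht
      have h := (hasDerivAt_pd1 hF hW (hseg' t ht)).comp t (haff t)
      exact h
    have hd2 : ∀ t ∈ Icc (0:ℝ) 1, HasDerivAt v' (v'' t) t := by
      intro t ht
      have h := ((hasDerivAt_pd1 hF1 hW (hseg' t ht)).comp t (haff t)).mul_const y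
      simpa [hv'def, hv''def, mul_assoc] using h
    have hc'' : ContinuousOn v'' (Icc (0:ℝ) 1) := by
      have hpath : ContinuousOn (fun t : ℝ => ((c + t * y, w) : ℝ × (Fin m → ℝ)))
          (Icc (0:ℝ) 1) := by fun_prop
      exact ((hF2.continuousOn.comp hpath hseg').mul continuousOn_const).mul continuousOn_const
    have htay := taylor2 v v' v'' hd1 hd2 hc''
    have hv1 : v 1 = F q := by
      simp only [hvdef, hydef]
      norm_num
      rfl
    have hv0 : v 0 = F (c, w) := by simp [hvdef]
    have hv'0 : v' 0 = 0 := by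
      simp only [hv'def]
      rw [show ((c + 0 * y : ℝ), w) = (f q.2, q.2) by simp [hcdef, hwdef]]
      rw [hlin q hq]; ring
    have hint : (∫ t in (0:ℝ)..1, (1 - t) * pd1 (pd1 F) (c + t * y, w))
        * y ^ 2 = ∫ t in (0:ℝ)..1, (1 - t) * v'' t := by
      rw [← intervalIntegral.integral_mul_const]
      refine intervalIntegral.integral_congr fun t _ => ?_
      simp only [hv''def]; ring
    rw [htay, hv1, hv0, hv'0, sub_zero, mul_comm] at hint
    show F q = y ^ 2 * (∫ t in (0:ℝ)..1, (1 - t) * pd1 (pd1 F) (c + t * y, w)) + F (c, w)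
    linarith

end division

/-! ### The main theorem -/

theorem division_step_cuspidal_edge {m : ℕ} (g : ℝ × (Fin m → ℝ) → ℝ)
    (xb : ℝ) (wb : Fin m → ℝ)
    (W : Set (ℝ × (Fin m → ℝ))) (hWopen : IsOpen W) (hmem : (xb, wb) ∈ W)
    (hg : ContDiffOn ℝ (⊤ : ℕ∞) g W)
    (h2 : pd1 (pd1 g) (xb, wb) = 0)
    (h3 : pd1 (pd1 (pd1 g)) (xb, wb) ≠ 0) :
    ∃ (N : Set (ℝ × (Fin m → ℝ))) (U₂ : Set (Fin m → ℝ)) (f : (Fin m → ℝ) → ℝ)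
      (φ₁ φ₂ : ℝ × (Fin m → ℝ) → ℝ) (k₁ k₂ : (Fin m → ℝ) → ℝ),
      IsOpen N ∧ (xb, wb) ∈ N ∧ N ⊆ W ∧
      IsOpen U₂ ∧ wb ∈ U₂ ∧
      ContDiffOn ℝ (⊤ : ℕ∞) f U₂ ∧ f wb = xb ∧
      {q | q ∈ N ∧ pd1 (pd1 g) q = 0} = {q | ∃ w ∈ U₂, q = (f w, w)} ∩ N ∧
      ContDiffOn ℝ (⊤ : ℕ∞) φ₁ N ∧ ContDiffOn ℝ (⊤ : ℕ∞) φ₂ N ∧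
      ContDiffOn ℝ (⊤ : ℕ∞) k₁ U₂ ∧ ContDiffOn ℝ (⊤ : ℕ∞) k₂ U₂ ∧
      (∀ q ∈ N, Pfun g q = (q.1 - f q.2) ^ 2 * φ₁ q + k₁ q.2 ∧
        Zfun g q = (q.1 - f q.2) ^ 2 * φ₂ q + k₂ q.2) ∧
      φ₁ (xb, wb) ≠ 0 := by
  classical
  -- smoothness of the derived functions
  have hP : ContDiffOn ℝ (⊤ : ℕ∞) (pd1 g) W := pd1_contDiffOn hg hWopen
  have hh : ContDiffOn ℝ (⊤ : ℕ∞) (pd1 (pd1 g)) W := pd1_contDiffOn hP hWopen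
  have hZ : ContDiffOn ℝ (⊤ : ℕ∞) (Zfun g) W := by
    have : ContDiffOn ℝ (⊤ : ℕ∞) (fun q : ℝ × (Fin m → ℝ) => q.1 * pd1 g q - g q) W :=
      (contDiff_fst.contDiffOn.mul hP).sub hg
    exact this
  -- ∂₁h at the base point
  have hpd1h : pd1 (pd1 (pd1 g)) (xb, wb) ≠ 0 := h3
  -- implicit function theorem
  obtain ⟨f, U₂, S, hU₂open, hwbU₂, hfc, hfwb, hSopen, hq0S, hSW, hgraph, hforward⟩ :=
    ift_block hh hWopen hmem h2 h3
  -- choose ε for the segment condition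
  obtain ⟨ε, hεpos, hεW⟩ := Metric.isOpen_iff.1 hWopen (xb, wb) hmem
  -- choose δ by continuity of f
  have hfcont : ContinuousAt f wb := hfc.continuousOn.continuousAt (hU₂open.mem_nhds hwbU₂)
  obtain ⟨δ1, hδ1pos, hδ1⟩ := Metric.continuousAt_iff.1 hfcont (ε/8) (by positivity)
  obtain ⟨δ2, hδ2pos, hδ2⟩ := Metric.isOpen_iff.1 hU₂open wb hwbU₂
  set δ : ℝ := min δ1 (min δ2 (ε/8)) with hδdef
  have hδpos : 0 < δ := by
    apply lt_min hδ1pos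
    exact lt_min hδ2pos (by positivity)
  have hδle1 : δ ≤ δ1 := min_le_left _ _
  have hδle2 : δ ≤ δ2 := le_trans (min_le_right _ _) (min_le_left _ _)
  have hδleε : δ ≤ ε/8 := le_trans (min_le_right _ _) (min_le_right _ _)
  set U₂fin : Set (Fin m → ℝ) := Metric.ball wb δ with hU₂findef
  have hU₂finU₂ : U₂fin ⊆ U₂ := fun w hw => hδ2 (Metric.mem_ball.2 (lt_of_lt_of_le hw hδle2))
  have hfbound : ∀ w ∈ U₂fin, |f w - xb| < ε/8 := by
    intro w hw
    have := hδ1 (lt_of_lt_of_le (Metric.mem_ball.1 hw) hδle1)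
    rwa [hfwb, Real.dist_eq] at this
  set N : Set (ℝ × (Fin m → ℝ)) := (Metric.ball xb (ε/8) ×ˢ U₂fin) ∩ S with hNdef
  have hNopen : IsOpen N := (Metric.isOpen_ball.prod Metric.isOpen_ball).inter hSopen
  have hq0N : (xb, wb) ∈ N :=
    ⟨⟨Metric.mem_ball_self (by positivity), Metric.mem_ball_self hδpos⟩, hq0S⟩
  have hNW : N ⊆ W := fun q hq => hSW hq.2
  have hNsub : ∀ q ∈ N, q.2 ∈ U₂fin := fun q hq => hq.1.2
  -- the segment condition
  have seg : ∀ q ∈ N, ∀ t ∈ Jint, (f q.2 + t * (q.1 - f q.2), q.2) ∈ W := by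
    intro q hq t ht
    apply hεW
    rw [Metric.mem_ball, Prod.dist_eq]
    have hq1 : |q.1 - xb| < ε/8 := by
      have := hq.1.1; rwa [Metric.mem_ball, Real.dist_eq] at this
    have hq2 : dist q.2 wb < δ := hq.1.2
    have hf2 : |f q.2 - xb| < ε/8 := hfbound q.2 hq.1.2
    have htabs : |t| < 2 := by
      rw [abs_lt]; exact ⟨by linarith [ht.1], ht.2⟩
    have hdiff : |q.1 - f q.2| < ε/4 := by
      have : |q.1 - f q.2| ≤ |q.1 - xb| + |f q.2 - xb| := by
        have := abs_sub (q.1 - xb) (f q.2 - xb)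
        calc |q.1 - f q.2| = |(q.1 - xb) - (f q.2 - xb)| := by ring_nf
        _ ≤ |q.1 - xb| + |f q.2 - xb| := abs_sub _ _
      linarith
    have h1 : dist (f q.2 + t * (q.1 - f q.2)) xb < ε := by
      rw [Real.dist_eq]
      have : |f q.2 + t * (q.1 - f q.2) - xb| ≤ |f q.2 - xb| + |t| * |q.1 - f q.2| := by
        calc |f q.2 + t * (q.1 - f q.2) - xb|
            = |(f q.2 - xb) + t * (q.1 - f q.2)| := by ring_nf
          _ ≤ |f q.2 - xb| + |t * (q.1 - f q.2)| := abs_add_le _ _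
          _ = |f q.2 - xb| + |t| * |q.1 - f q.2| := by rw [abs_mul]
      have hmul : |t| * |q.1 - f q.2| ≤ 2 * (ε/4) := by
        apply mul_le_mul (le_of_lt htabs) (le_of_lt hdiff) (abs_nonneg _) (by norm_num)
      linarith
    have h2' : dist q.2 wb < ε := lt_of_lt_of_le hq2 (by linarith)
    exact max_lt h1 h2'
  -- vanishing of ∂₁P and ∂₁Z on the graph
  have hlinP : ∀ q ∈ N, pd1 (pd1 g) (f q.2, q.2) = 0 := fun q hq =>
    (hgraph q.2 (hU₂finU₂ (hNsub q hq))).2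
  have hlinZ : ∀ q ∈ N, pd1 (Zfun g) (f q.2, q.2) = 0 := by
    intro q hq
    have hmemW : (f q.2, q.2) ∈ W := (hgraph q.2 (hU₂finU₂ (hNsub q hq))).1
    rw [pd1_Zfun hg hWopen hmemW]
    simp only
    rw [(hgraph q.2 (hU₂finU₂ (hNsub q hq))).2]
    ring
  -- apply the division lemma to P and Z
  have hfc' : ContDiffOn ℝ (⊤ : ℕ∞) f U₂fin := hfc.mono hU₂finU₂
  obtain ⟨hφ₁smooth, hφ₁eq⟩ := division_lemma hP hWopen hfc' hNopen hNsub seg hlinP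
  obtain ⟨hφ₂smooth, hφ₂eq⟩ := division_lemma hZ hWopen hfc' hNopen hNsub seg hlinZ
  -- the answer
  refine ⟨N, U₂fin, f,
    (fun q : ℝ × (Fin m → ℝ) =>
      ∫ t in (0:ℝ)..1, (1 - t) * pd1 (pd1 (pd1 g)) (f q.2 + t * (q.1 - f q.2), q.2)),
    (fun q : ℝ × (Fin m → ℝ) =>
      ∫ t in (0:ℝ)..1, (1 - t) * pd1 (pd1 (Zfun g)) (f q.2 + t * (q.1 - f q.2), q.2)),
    (fun w => pd1 g (f w, w)), (fun w => Zfun g (f w, w)),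
    hNopen, hq0N, hNW, Metric.isOpen_ball, Metric.mem_ball_self hδpos,
    hfc', hfwb, ?_, hφ₁smooth, hφ₂smooth, ?_, ?_, ?_, ?_⟩
  -- the set equality
  · ext q
    simp only [Set.mem_setOf_eq, Set.mem_inter_iff]
    constructor
    · rintro ⟨hqN, hq0'⟩
      refine ⟨⟨q.2, hNsub q hqN, ?_⟩, hqN⟩
      have := hforward q hqN.2 hq0'
      exact Prod.ext this rfl
    · rintro ⟨⟨w, hw, rfl⟩, hqN⟩
      exact ⟨hqN, (hgraph w (hU₂finU₂ hw)).2⟩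
  -- smoothness of k₁
  · have hmaps : ∀ w ∈ U₂fin, ((f w, w) : ℝ × (Fin m → ℝ)) ∈ W := fun w hw =>
      (hgraph w (hU₂finU₂ hw)).1
    exact hP.comp (hfc'.prodMk contDiffOn_id) hmaps
  -- smoothness of k₂
  · have hmaps : ∀ w ∈ U₂fin, ((f w, w) : ℝ × (Fin m → ℝ)) ∈ W := fun w hw =>
      (hgraph w (hU₂finU₂ hw)).1
    exact hZ.comp (hfc'.prodMk contDiffOn_id) hmaps
  -- the identities
  · intro q hq
    exact ⟨hφ₁eq q hq, hφ₂eq q hq⟩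
  -- nonvanishing of φ₁ at the base point
  · have hval : (fun q : ℝ × (Fin m → ℝ) =>
        ∫ t in (0:ℝ)..1, (1 - t) * pd1 (pd1 (pd1 g)) (f q.2 + t * (q.1 - f q.2), q.2))
        (xb, wb) = (pd1 (pd1 (pd1 g)) (xb, wb)) / 2 := by
      simp only
      have hcongr : ∀ t ∈ uIcc (0:ℝ) 1,
          (1 - t) * pd1 (pd1 (pd1 g)) (f wb + t * (xb - f wb), wb)
          = (1 - t) * pd1 (pd1 (pd1 g)) (xb, wb) := by
        intro t _
        rw [hfwb]
        norm_num
      rw [intervalIntegral.integral_congr hcongr, intervalIntegral.integral_mul_const]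
      have : (∫ t in (0:ℝ)..1, (1 - t)) = 1/2 := by
        have hid : IntervalIntegrable (fun t : ℝ => t) volume 0 1 :=
          (continuous_id' : Continuous fun t : ℝ => t).intervalIntegrable 0 1
        rw [intervalIntegral.integral_sub intervalIntegrable_const hid]
        rw [integral_id]
        simp
        norm_num
      rw [this]; ring
    rw [hval]
    intro habs
    apply h3
    field_simp at habs
    linarith
end

section
/- For every vector v = (v₁,…,v_n) ∈ ℝ^n and every r ∈ ℝ^n, define h_v(r) = Σ_{i,k∈I} ∂_i∂_k g(r)·v_i v_k − Σ_{j,l∈J} ∂_j∂_l g(r)·v_j v_l and C_v(r) = Σ_{k,l,m=1}^n ∂_k∂_l∂_m g(r)·v_k v_l v_m. Then C_v(r) + (d/ds)|_{s=0} h_v(r + s·v) = −2·(∂/∂s)(∂/∂t)²|_{s=t=0} D(r + s·v, r + t·v). (This is Proposition 4.1, τ(Φ(X), ∇^{E′}_X Φ′(X)) = ¼(C(X,X,X) + X h(X,X)), combined with Corollary 4.3 identity τ(Φ(X), ∇^{E′}_X Φ′(X)) = −½ D[X|XX], expressed in affine flat coordinates for a constant vector field X = v.) -/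
/-!
Statement 4: Proposition 4.1 combined with Corollary 4.3 (equation (div1)) in
affine flat coordinates, for a constant vector field `X = v`:
`C(X,X,X) + X h(X,X) = -2 · D[X|XX]`.
-/

/-- Partial derivative in the k-th coordinate. -/
noncomputable def pder {n : ℕ} (k : Fin n) (g : (Fin n → ℝ) → ℝ) : (Fin n → ℝ) → ℝ :=
  fun a => deriv (fun t => g (Function.update a k t)) (a k)

/-- The canonical divergence `D(a,b)` associated to a generating function `g`
and a partition `I ⊔ J` of the index set. -/
noncomputable def canDiv {n : ℕ} (I J : Finset (Fin n)) (g : (Fin n → ℝ) → ℝ)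
    (a b : Fin n → ℝ) : ℝ :=
  g a - g b - ∑ j ∈ J, pder j g a * (a j - b j) + ∑ i ∈ I, pder i g b * (b i - a i)


noncomputable def dd {n : ℕ} (f : (Fin n → ℝ) → ℝ) (k : Fin n) : (Fin n → ℝ) → ℝ :=
  fun a => fderiv ℝ f a (Pi.single k 1)

lemma contDiff_dd {n : ℕ} {f : (Fin n → ℝ) → ℝ} (hf : ContDiff ℝ (⊤ : ℕ∞) f) (k : Fin n) :
    ContDiff ℝ (⊤ : ℕ∞) (dd f k) := by
  have h1 : ContDiff ℝ (⊤ : ℕ∞) (fderiv ℝ f) := hf.fderiv_right (by simp)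
  exact (ContinuousLinearMap.apply ℝ ℝ (Pi.single k 1 : Fin n → ℝ)).contDiff.comp h1

lemma pder_eq_dd {n : ℕ} {f : (Fin n → ℝ) → ℝ} (hf : Differentiable ℝ f) (k : Fin n) :
    pder k f = dd f k := by
  funext a
  have h1 : ∀ t : ℝ, Function.update a k t
      = a + (t - a k) • (Pi.single k 1 : Fin n → ℝ) := by
    intro t; ext j
    by_cases h : j = k
    · subst h; simp [Function.update]
    · simp [Function.update, h, Pi.single_apply, Ne.symm h]
  have h2 : HasDerivAt (fun t : ℝ => a + (t - a k) • (Pi.single k 1 : Fin n → ℝ))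
      (Pi.single k 1) (a k) := by
    simpa using (((hasDerivAt_id (a k)).sub_const (a k)).smul_const
      (Pi.single k 1 : Fin n → ℝ)).const_add a
  have h3 := ((hf (a + ((a k) - a k) • (Pi.single k 1 : Fin n → ℝ))).hasFDerivAt).comp_hasDerivAt
    (a k) h2
  have h4 : HasDerivAt (fun t : ℝ => f (Function.update a k t))
      (fderiv ℝ f a (Pi.single k 1)) (a k) := by
    simp only [h1]
    simpa [Function.comp_def] using h3
  exact h4.deriv

lemma fderiv_eq_sum_dd {n : ℕ} {f : (Fin n → ℝ) → ℝ} {x : Fin n → ℝ}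
    (hf : DifferentiableAt ℝ f x) (v : Fin n → ℝ) :
    fderiv ℝ f x v = ∑ k : Fin n, dd f k x * v k := by
  have h1 : v = ∑ k : Fin n, v k • (Pi.single k 1 : Fin n → ℝ) := by
    conv_lhs => rw [← Finset.univ_sum_single v]
    refine Finset.sum_congr rfl fun k _ => ?_
    ext j; by_cases h : k = j <;> simp [Pi.single_apply, h]
  conv_lhs => rw [h1]
  rw [map_sum]
  refine Finset.sum_congr rfl fun k _ => ?_
  rw [map_smul]; simp [dd, mul_comm]

lemma hasDerivAt_line {n : ℕ} {f : (Fin n → ℝ) → ℝ} (hf : Differentiable ℝ f)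
    (r v : Fin n → ℝ) (s : ℝ) :
    HasDerivAt (fun u : ℝ => f (r + u • v)) (∑ k : Fin n, dd f k (r + s • v) * v k) s := by
  have hline : HasDerivAt (fun u : ℝ => r + u • v) v s := by
    simpa using ((hasDerivAt_id s).smul_const v).const_add r
  have h := (hf (r + s • v)).hasFDerivAt.comp_hasDerivAt s hline
  rw [fderiv_eq_sum_dd (hf _) v] at h
  simpa [Function.comp_def] using h

lemma dd_comm {n : ℕ} {f : (Fin n → ℝ) → ℝ} (hf : ContDiff ℝ (⊤ : ℕ∞) f) (k l : Fin n)
    (a : Fin n → ℝ) : dd (dd f l) k a = dd (dd f k) l a := by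
  have hdf : ContDiff ℝ (⊤ : ℕ∞) (fderiv ℝ f) := hf.fderiv_right (by simp)
  have key : ∀ (k : Fin n) (w : Fin n → ℝ), dd (fun y => fderiv ℝ f y w) k a
      = fderiv ℝ (fderiv ℝ f) a (Pi.single k 1) w := by
    intro k w
    have hA : HasFDerivAt (fun y => fderiv ℝ f y w)
        ((ContinuousLinearMap.apply ℝ ℝ w).comp (fderiv ℝ (fderiv ℝ f) a)) a :=
      (ContinuousLinearMap.apply ℝ ℝ w).hasFDerivAt.comp a
        ((hdf.differentiable (by simp) a).hasFDerivAt)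
    have := congrArg (fun (L : (Fin n → ℝ) →L[ℝ] ℝ) => L (Pi.single k 1)) hA.fderiv
    simpa [dd] using this
  have hsymm := second_derivative_symmetric
    (f' := fderiv ℝ f) (f'' := fderiv ℝ (fderiv ℝ f) a) (x := a)
    (fun y => (hf.differentiable (by simp) y).hasFDerivAt)
    ((hdf.differentiable (by simp) a).hasFDerivAt) (Pi.single k 1) (Pi.single l 1)
  calc dd (dd f l) k a = fderiv ℝ (fderiv ℝ f) a (Pi.single k 1) (Pi.single l 1) :=
        key k (Pi.single l 1)
    _ = fderiv ℝ (fderiv ℝ f) a (Pi.single l 1) (Pi.single k 1) := hsymm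
    _ = dd (dd f k) l a := (key l (Pi.single k 1)).symm

noncomputable def S3 {n : ℕ} (T : Fin n → Fin n → Fin n → ℝ)
    (A B C : Finset (Fin n)) : ℝ := ∑ a ∈ A, ∑ b ∈ B, ∑ c ∈ C, T a b c

lemma key_sum {n : ℕ} (I J : Finset (Fin n)) (hdisj : Disjoint I J)
    (hunion : I ∪ J = Finset.univ) (T : Fin n → Fin n → Fin n → ℝ)
    (h12 : ∀ a b c, T a b c = T b a c) (h23 : ∀ a b c, T a b c = T a c b) :
    S3 T Finset.univ Finset.univ Finset.univ
      + (S3 T I I Finset.univ - S3 T J J Finset.univ)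
    = 2 * S3 T I Finset.univ Finset.univ := by
  classical
  have hsplit : ∀ (f : Fin n → ℝ), ∑ k : Fin n, f k = ∑ k ∈ I, f k + ∑ k ∈ J, f k := by
    intro f; rw [← Finset.sum_union hdisj, hunion]
  have hs1 : ∀ B C, S3 T Finset.univ B C = S3 T I B C + S3 T J B C := fun B C => hsplit _
  have hs2 : ∀ A C, S3 T A Finset.univ C = S3 T A I C + S3 T A J C := by
    intro A C; unfold S3; rw [← Finset.sum_add_distrib]
    exact Finset.sum_congr rfl fun a _ => hsplit _
  have hs3 : ∀ A B, S3 T A B Finset.univ = S3 T A B I + S3 T A B J := by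
    intro A B; unfold S3; rw [← Finset.sum_add_distrib]
    refine Finset.sum_congr rfl fun a _ => ?_
    rw [← Finset.sum_add_distrib]; exact Finset.sum_congr rfl fun b _ => hsplit _
  have hS12 : ∀ A B C, S3 T A B C = S3 T B A C := by
    intro A B C; unfold S3; rw [Finset.sum_comm]
    exact Finset.sum_congr rfl fun b _ => Finset.sum_congr rfl fun a _ =>
      Finset.sum_congr rfl fun c _ => h12 a b c
  have hS23 : ∀ A B C, S3 T A B C = S3 T A C B := by
    intro A B C; unfold S3
    refine Finset.sum_congr rfl fun a _ => ?_
    rw [Finset.sum_comm]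
    exact Finset.sum_congr rfl fun c _ => Finset.sum_congr rfl fun b _ => h23 a b c
  have c1 : S3 T J I I = S3 T I I J := by rw [hS12, hS23]
  have c2 : S3 T I J I = S3 T I I J := by rw [hS23]
  have c3 : S3 T J I J = S3 T I J J := by rw [hS12]
  have c4 : S3 T J J I = S3 T I J J := by rw [hS23, hS12]
  simp only [hs1, hs2, hs3, c1, c2, c3, c4]
  ring

theorem cubic_tensor_plus_deriv_metric_eq_divergence {n : ℕ} (I J : Finset (Fin n))
    (hdisj : Disjoint I J) (hunion : I ∪ J = Finset.univ)
    (g : (Fin n → ℝ) → ℝ) (hg : ContDiff ℝ (⊤ : ℕ∞) g)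
    (v r : Fin n → ℝ) :
    (∑ k : Fin n, ∑ l : Fin n, ∑ p : Fin n,
        pder k (pder l (pder p g)) r * v k * v l * v p)
      + deriv (fun s : ℝ =>
          (∑ i ∈ I, ∑ k ∈ I, pder i (pder k g) (r + s • v) * v i * v k)
            - ∑ j ∈ J, ∑ l ∈ J, pder j (pder l g) (r + s • v) * v j * v l) 0
    = -2 * deriv (fun s : ℝ =>
        deriv (deriv (fun t : ℝ => canDiv I J g (r + s • v) (r + t • v))) 0) 0 := by
  classical
  have hgd : Differentiable ℝ g := hg.differentiable (by simp)
  have hc1 : ∀ k, ContDiff ℝ (⊤ : ℕ∞) (dd g k) := fun k => contDiff_dd hg k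
  have hc2 : ∀ k l, ContDiff ℝ (⊤ : ℕ∞) (dd (dd g k) l) := fun k l => contDiff_dd (hc1 k) l
  have hd1 : ∀ k, Differentiable ℝ (dd g k) := fun k => (hc1 k).differentiable (by simp)
  have hd2 : ∀ k l, Differentiable ℝ (dd (dd g k) l) :=
    fun k l => (hc2 k l).differentiable (by simp)
  have e1 : ∀ p, pder p g = dd g p := fun p => pder_eq_dd hgd p
  have e2 : ∀ l p, pder l (pder p g) = dd (dd g p) l := fun l p => by
    rw [e1 p]; exact pder_eq_dd (hd1 p) l
  have e3 : ∀ k l p, pder k (pder l (pder p g)) = dd (dd (dd g p) l) k := fun k l p => by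
    rw [e2 l p]; exact pder_eq_dd (hd2 p l) k
  have e2' : ∀ k l p, pder k (dd (dd g p) l) = dd (dd (dd g p) l) k :=
    fun k l p => pder_eq_dd (hd2 p l) k
  have gIn : ∀ b c, dd (dd g c) b = dd (dd g b) c :=
    fun b c => funext fun y => dd_comm hg b c y
  have g12 : ∀ a b c, dd (dd (dd g c) b) a r = dd (dd (dd g c) a) b r :=
    fun a b c => dd_comm (hc1 c) a b r
  have g23 : ∀ a b c, dd (dd (dd g c) b) a r = dd (dd (dd g b) c) a r :=
    fun a b c => by rw [gIn b c]
  -- scalar functions along the line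
  set q : ℝ → ℝ := fun u => ∑ k : Fin n, dd g k (r + u • v) * v k with hq
  set pI : ℝ → ℝ := fun u => ∑ i ∈ I, dd g i (r + u • v) * v i with hpI
  set pI2 : ℝ → ℝ :=
    fun u => ∑ i ∈ I, (∑ m : Fin n, dd (dd g i) m (r + u • v) * v m) * v i with hpI2
  set q2 : ℝ → ℝ :=
    fun u => ∑ k : Fin n, (∑ m : Fin n, dd (dd g k) m (r + u • v) * v m) * v k with hq2
  set pI3 : ℝ → ℝ := fun u => ∑ i ∈ I,
      (∑ m : Fin n, (∑ p : Fin n, dd (dd (dd g i) m) p (r + u • v) * v p) * v m) * v i with hpI3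
  have Hq : ∀ u, HasDerivAt (fun w : ℝ => g (r + w • v)) (q u) u :=
    fun u => hasDerivAt_line hgd r v u
  have HpI : ∀ u, HasDerivAt pI (pI2 u) u := fun u =>
    HasDerivAt.fun_sum fun i _ => (hasDerivAt_line (hd1 i) r v u).mul_const (v i)
  have Hq' : ∀ u, HasDerivAt q (q2 u) u := fun u =>
    HasDerivAt.fun_sum fun k _ => (hasDerivAt_line (hd1 k) r v u).mul_const (v k)
  have HpI2 : ∀ u, HasDerivAt pI2 (pI3 u) u := fun u =>
    HasDerivAt.fun_sum fun i _ =>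
      (HasDerivAt.fun_sum fun m _ =>
        (hasDerivAt_line (hd2 i m) r v u).mul_const (v m)).mul_const (v i)
  -- expanding canDiv along the line
  have hJsum : ∀ s t : ℝ,
      (∑ j ∈ J, dd g j (r + s • v) * ((r + s • v) j - (r + t • v) j))
        = (s - t) * ∑ j ∈ J, dd g j (r + s • v) * v j := by
    intro s t; rw [Finset.mul_sum]
    refine Finset.sum_congr rfl fun j _ => ?_
    simp only [Pi.add_apply, Pi.smul_apply, smul_eq_mul]; ring
  have hIsum : ∀ s t : ℝ,
      (∑ i ∈ I, dd g i (r + t • v) * ((r + t • v) i - (r + s • v) i))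
        = (t - s) * pI t := by
    intro s t; rw [hpI]; simp only [Finset.mul_sum]
    refine Finset.sum_congr rfl fun i _ => ?_
    simp only [Pi.add_apply, Pi.smul_apply, smul_eq_mul]; ring
  have hcan : ∀ s t : ℝ, canDiv I J g (r + s • v) (r + t • v)
      = g (r + s • v) - g (r + t • v)
        - (s - t) * (∑ j ∈ J, dd g j (r + s • v) * v j) + (t - s) * pI t := by
    intro s t
    simp only [canDiv, e1]
    rw [hJsum s t, hIsum s t]
  have hD1 : ∀ s : ℝ, deriv (fun t : ℝ => canDiv I J g (r + s • v) (r + t • v))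
      = fun t : ℝ => (∑ j ∈ J, dd g j (r + s • v) * v j) - q t
          + (pI t + (t - s) * pI2 t) := by
    intro s; funext t
    have hfun : (fun t : ℝ => canDiv I J g (r + s • v) (r + t • v))
        = fun t : ℝ => g (r + s • v) - g (r + t • v)
            - (s - t) * (∑ j ∈ J, dd g j (r + s • v) * v j) + (t - s) * pI t :=
      funext fun t => hcan s t
    rw [hfun]
    have H := (((hasDerivAt_const t (g (r + s • v))).fun_sub (Hq t)).fun_sub
        ((HasDerivAt.const_sub s (hasDerivAt_id' t)).mul_const
          (∑ j ∈ J, dd g j (r + s • v) * v j))).fun_add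
        (((hasDerivAt_id' t).sub_const s).fun_mul (HpI t))
    rw [H.deriv]; ring
  have hD2 : ∀ s : ℝ, deriv (deriv (fun t : ℝ => canDiv I J g (r + s • v) (r + t • v))) 0
      = 2 * pI2 0 - q2 0 - s * pI3 0 := by
    intro s
    rw [hD1 s]
    have H := ((hasDerivAt_const (0:ℝ) (∑ j ∈ J, dd g j (r + s • v) * v j)).fun_sub (Hq' 0)).fun_add
      ((HpI 0).fun_add (((hasDerivAt_id' (0:ℝ)).sub_const s).fun_mul (HpI2 0)))
    rw [H.deriv]; ring
  have hOuter : deriv (fun s : ℝ =>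
      deriv (deriv (fun t : ℝ => canDiv I J g (r + s • v) (r + t • v))) 0) 0 = -pI3 0 := by
    have hfun : (fun s : ℝ =>
        deriv (deriv (fun t : ℝ => canDiv I J g (r + s • v) (r + t • v))) 0)
        = fun s : ℝ => 2 * pI2 0 - q2 0 - s * pI3 0 := funext fun s => hD2 s
    rw [hfun]
    have H := (hasDerivAt_const (0:ℝ) (2 * pI2 0 - q2 0)).fun_sub
      ((hasDerivAt_id' (0:ℝ)).mul_const (pI3 0))
    rw [H.deriv]; ring
  have hB : deriv (fun s : ℝ =>
      (∑ i ∈ I, ∑ k ∈ I, dd (dd g k) i (r + s • v) * v i * v k)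
        - ∑ j ∈ J, ∑ l ∈ J, dd (dd g l) j (r + s • v) * v j * v l) 0
      = (∑ i ∈ I, ∑ k ∈ I,
          (∑ m : Fin n, dd (dd (dd g k) i) m (r + (0:ℝ) • v) * v m) * v i * v k)
        - ∑ j ∈ J, ∑ l ∈ J,
          (∑ m : Fin n, dd (dd (dd g l) j) m (r + (0:ℝ) • v) * v m) * v j * v l := by
    have H : HasDerivAt (fun s : ℝ =>
        (∑ i ∈ I, ∑ k ∈ I, dd (dd g k) i (r + s • v) * v i * v k)
          - ∑ j ∈ J, ∑ l ∈ J, dd (dd g l) j (r + s • v) * v j * v l)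
        ((∑ i ∈ I, ∑ k ∈ I,
            (∑ m : Fin n, dd (dd (dd g k) i) m (r + (0:ℝ) • v) * v m) * v i * v k)
          - ∑ j ∈ J, ∑ l ∈ J,
            (∑ m : Fin n, dd (dd (dd g l) j) m (r + (0:ℝ) • v) * v m) * v j * v l) 0 :=
      HasDerivAt.sub
        (HasDerivAt.fun_sum fun i _ => HasDerivAt.fun_sum fun k _ =>
          ((hasDerivAt_line (hd2 k i) r v 0).mul_const (v i)).mul_const (v k))
        (HasDerivAt.fun_sum fun j _ => HasDerivAt.fun_sum fun l _ =>
          ((hasDerivAt_line (hd2 l j) r v 0).mul_const (v j)).mul_const (v l))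
    exact H.deriv
  simp only [e3, e2, e2']
  rw [hB, hOuter, hpI3]
  simp only [zero_smul, add_zero]
  -- now pure algebra with triple sums
  set T : Fin n → Fin n → Fin n → ℝ :=
    fun a b c => dd (dd (dd g c) b) a r * v a * v b * v c with hT
  have h12 : ∀ a b c, T a b c = T b a c := by
    intro a b c; simp only [hT]; rw [g12 a b c]; ring
  have h23 : ∀ a b c, T a b c = T a c b := by
    intro a b c; simp only [hT]; rw [g23 a b c]; ring
  have G1 : (∑ k : Fin n, ∑ l : Fin n, ∑ p : Fin n,
      dd (dd (dd g p) l) k r * v k * v l * v p) = S3 T Finset.univ Finset.univ Finset.univ := by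
    simp only [S3, hT]
  have G2 : (∑ i ∈ I, ∑ k ∈ I,
      (∑ m : Fin n, dd (dd (dd g k) i) m r * v m) * v i * v k) = S3 T I I Finset.univ := by
    simp only [S3, hT]
    refine Finset.sum_congr rfl fun i _ => Finset.sum_congr rfl fun k _ => ?_
    rw [Finset.sum_mul, Finset.sum_mul]
    refine Finset.sum_congr rfl fun m _ => ?_
    rw [g12 m i k, g23 i m k]; ring
  have G3 : (∑ j ∈ J, ∑ l ∈ J,
      (∑ m : Fin n, dd (dd (dd g l) j) m r * v m) * v j * v l) = S3 T J J Finset.univ := by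
    simp only [S3, hT]
    refine Finset.sum_congr rfl fun j _ => Finset.sum_congr rfl fun l _ => ?_
    rw [Finset.sum_mul, Finset.sum_mul]
    refine Finset.sum_congr rfl fun m _ => ?_
    rw [g12 m j l, g23 j m l]; ring
  have G4 : (∑ i ∈ I,
      (∑ m : Fin n, (∑ p : Fin n, dd (dd (dd g i) m) p r * v p) * v m) * v i)
      = S3 T I Finset.univ Finset.univ := by
    simp only [S3, hT]
    refine Finset.sum_congr rfl fun i _ => ?_
    rw [Finset.sum_mul]
    refine Finset.sum_congr rfl fun m _ => ?_
    rw [Finset.sum_mul, Finset.sum_mul]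
    refine Finset.sum_congr rfl fun p _ => ?_
    rw [g12 p m i, g23 m p i, g12 m i p]; ring
  rw [G1, G2, G3, G4]
  have := key_sum I J hdisj hunion T h12 h23
  linarith [this]
end

section
/- For all indices t, u, v ∈ {1,…,n} and all r ∈ ℝ^n: if u ∈ I then D[u | t v](r) = −∂_t∂_u∂_v g(r), and if u ∈ J then D[u | t v](r) = 0. (This is the coordinate content of equation (dm1) in Theorem 4.2: τ(Φ(Z), ∇^{E′}_Y Φ′(W)) = −½ D_M[Z | Y W].) -/
/-- Partial derivative in the u-th coordinate of the first argument. -/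
noncomputable def dFst {n : ℕ} (u : Fin n) (F : (Fin n → ℝ) → (Fin n → ℝ) → ℝ) :
    (Fin n → ℝ) → (Fin n → ℝ) → ℝ :=
  fun a b => deriv (fun t => F (Function.update a u t) b) (a u)

/-- Partial derivative in the u-th coordinate of the second argument. -/
noncomputable def dSnd {n : ℕ} (u : Fin n) (F : (Fin n → ℝ) → (Fin n → ℝ) → ℝ) :
    (Fin n → ℝ) → (Fin n → ℝ) → ℝ :=
  fun a b => deriv (fun t => F a (Function.update b u t)) (b u)

section Helpers
variable {n : ℕ}

noncomputable def pd (k : Fin n) (f : (Fin n → ℝ) → ℝ) : (Fin n → ℝ) → ℝ :=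
  fun a => fderiv ℝ f a (Pi.single k 1)

lemma key {f : (Fin n → ℝ) → ℝ} (a : Fin n → ℝ) (k : Fin n) (s : ℝ)
    (hf : DifferentiableAt ℝ f (Function.update a k s)) :
    HasDerivAt (fun t => f (Function.update a k t)) (pd k f (Function.update a k s)) s := by
  have h := hf.hasFDerivAt.comp_hasDerivAt s (hasDerivAt_update a k s)
  exact h

lemma key' {f : (Fin n → ℝ) → ℝ} (a : Fin n → ℝ) (k : Fin n)
    (hf : DifferentiableAt ℝ f a) :
    HasDerivAt (fun t => f (Function.update a k t)) (pd k f a) (a k) := by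
  have h := key a k (a k) (by rwa [Function.update_eq_self])
  rwa [Function.update_eq_self] at h

lemma pder_eq {f : (Fin n → ℝ) → ℝ} (hf : Differentiable ℝ f) (k : Fin n) (a : Fin n → ℝ) :
    pder k f a = pd k f a := (key' a k (hf a)).deriv

lemma contDiff_pd (k : Fin n) {f : (Fin n → ℝ) → ℝ} (hf : ContDiff ℝ (⊤ : ℕ∞) f) :
    ContDiff ℝ (⊤ : ℕ∞) (pd k f) := by
  have h1 : ContDiff ℝ (⊤ : ℕ∞) (fderiv ℝ f) := hf.fderiv_right (mod_cast le_top)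
  exact (ContinuousLinearMap.apply ℝ ℝ (Pi.single k 1)).contDiff.comp h1

lemma pd_comm {f : (Fin n → ℝ) → ℝ} (hf : ContDiff ℝ (⊤ : ℕ∞) f) (k l : Fin n) :
    pd k (pd l f) = pd l (pd k f) := by
  funext x
  have hd : ∀ y, HasFDerivAt f (fderiv ℝ f y) y :=
    fun y => (hf.differentiable (by simp) y).hasFDerivAt
  have h1 : ContDiff ℝ (⊤ : ℕ∞) (fderiv ℝ f) := hf.fderiv_right (mod_cast le_top)
  have hx : HasFDerivAt (fderiv ℝ f) (fderiv ℝ (fderiv ℝ f) x) x :=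
    (h1.differentiable (by simp) x).hasFDerivAt
  have sym := second_derivative_symmetric hd hx
  have hcomp : ∀ (w : Fin n → ℝ) (y : Fin n → ℝ),
      fderiv ℝ (fun z => fderiv ℝ f z w) y
        = (ContinuousLinearMap.apply ℝ ℝ w).comp (fderiv ℝ (fderiv ℝ f) y) := by
    intro w y
    exact ((ContinuousLinearMap.apply ℝ ℝ w).hasFDerivAt.comp y
      (h1.differentiable (by simp) y).hasFDerivAt).fderiv
  show fderiv ℝ (pd l f) x (Pi.single k 1) = fderiv ℝ (pd k f) x (Pi.single l 1)
  unfold pd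
  rw [hcomp, hcomp]
  exact sym _ _

end Helpers

theorem divergence_third_derivative {n : ℕ} (I J : Finset (Fin n))
    (hdisj : Disjoint I J) (hunion : I ∪ J = Finset.univ)
    (g : (Fin n → ℝ) → ℝ) (hg : ContDiff ℝ (⊤ : ℕ∞) g)
    (t u v : Fin n) (r : Fin n → ℝ) :
    (u ∈ I → dFst u (dSnd t (dSnd v (canDiv I J g))) r r
        = -(pder t (pder u (pder v g)) r)) ∧
    (u ∈ J → dFst u (dSnd t (dSnd v (canDiv I J g))) r r = 0) := by
  have hgd : Differentiable ℝ g := hg.differentiable (by simp)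
  have hC1 : ∀ i, ContDiff ℝ (⊤ : ℕ∞) (pd i g) := fun i => contDiff_pd i hg
  have hD1 : ∀ i, Differentiable ℝ (pd i g) :=
    fun i => (hC1 i).differentiable (by simp)
  have hD2 : ∀ k i, Differentiable ℝ (pd k (pd i g)) :=
    fun k i => (contDiff_pd k (hC1 i)).differentiable (by simp)
  -- Step A: first derivative in the second argument
  have hA : ∀ a b, dSnd v (canDiv I J g) a b
      = -(pd v g b) + (if v ∈ J then pd v g a else 0)
        + ((∑ i ∈ I, pd v (pd i g) b * (b i - a i))
          + (if v ∈ I then pd v g b else 0)) := by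
    intro a b
    have hfun : (fun s => canDiv I J g a (Function.update b v s))
        = fun s => g a - g (Function.update b v s)
            - ∑ j ∈ J, pd j g a * (a j - Function.update b v s j)
            + ∑ i ∈ I, pd i g (Function.update b v s) * (Function.update b v s i - a i) := by
      funext s; simp only [canDiv, pder_eq hgd]
    have h2 : HasDerivAt (fun s => g a - g (Function.update b v s)) (0 - pd v g b) (b v) :=
      (hasDerivAt_const _ _).sub (key' b v (hgd b))
    have hJterm : ∀ j ∈ J, HasDerivAt (fun s => pd j g a * (a j - Function.update b v s j))
        (if j = v then -(pd j g a) else 0) (b v) := by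
      intro j _
      rcases eq_or_ne j v with rfl | hjv
      · simp only [if_pos rfl, Function.update_self]
        simpa using HasDerivAt.const_mul (pd j g a) ((hasDerivAt_id (b j)).const_sub (a j))
      · simp only [if_neg hjv, Function.update_of_ne hjv]
        exact hasDerivAt_const _ _
    have hIterm : ∀ i ∈ I, HasDerivAt
        (fun s => pd i g (Function.update b v s) * (Function.update b v s i - a i))
        (pd v (pd i g) b * (b i - a i) + pd i g b * (if i = v then 1 else 0)) (b v) := by
      intro i _
      have ha : HasDerivAt (fun s => pd i g (Function.update b v s)) (pd v (pd i g) b) (b v) :=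
        key' b v (hD1 i b)
      have hb : HasDerivAt (fun s => Function.update b v s i - a i)
          (if i = v then 1 else 0) (b v) := by
        rcases eq_or_ne i v with rfl | hiv
        · simp only [Function.update_self, if_pos rfl]
          simpa using (hasDerivAt_id (b i)).sub_const (a i)
        · simp only [Function.update_of_ne hiv, if_neg hiv]
          exact hasDerivAt_const _ _
      simpa [Function.update_eq_self, Pi.mul_def] using ha.mul hb
    have total := (h2.sub (HasDerivAt.fun_sum hJterm)).add (HasDerivAt.fun_sum hIterm)
    simp only [dSnd]
    rw [hfun]
    erw [total.deriv]
    simp only [Finset.sum_add_distrib, mul_ite, mul_one, mul_zero, Finset.sum_ite_eq']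
    split_ifs <;> ring
  have hAfun : dSnd v (canDiv I J g)
      = fun a b => -(pd v g b) + (if v ∈ J then pd v g a else 0)
        + ((∑ i ∈ I, pd v (pd i g) b * (b i - a i))
          + (if v ∈ I then pd v g b else 0)) := by
    funext a b; exact hA a b
  -- Step B: second derivative in the second argument
  have hB : ∀ a b, dSnd t (dSnd v (canDiv I J g)) a b
      = -(pd t (pd v g) b) + ((∑ i ∈ I, pd t (pd v (pd i g)) b * (b i - a i))
          + ((if t ∈ I then pd v (pd t g) b else 0)
            + (if v ∈ I then pd t (pd v g) b else 0))) := by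
    intro a b
    rw [hAfun]
    simp only [dSnd]
    have h1 : HasDerivAt (fun s => -(pd v g (Function.update b t s)))
        (-(pd t (pd v g) b)) (b t) := (key' b t (hD1 v b)).neg
    have h2 : HasDerivAt (fun _ : ℝ => if v ∈ J then pd v g a else 0) 0 (b t) :=
      hasDerivAt_const _ _
    have hIterm : ∀ i ∈ I, HasDerivAt
        (fun s => pd v (pd i g) (Function.update b t s) * (Function.update b t s i - a i))
        (pd t (pd v (pd i g)) b * (b i - a i) + pd v (pd i g) b * (if i = t then 1 else 0))
        (b t) := by
      intro i _
      have ha : HasDerivAt (fun s => pd v (pd i g) (Function.update b t s))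
          (pd t (pd v (pd i g)) b) (b t) := key' b t (hD2 v i b)
      have hb : HasDerivAt (fun s => Function.update b t s i - a i)
          (if i = t then 1 else 0) (b t) := by
        rcases eq_or_ne i t with rfl | hit
        · simp only [Function.update_self, if_pos rfl]
          simpa using (hasDerivAt_id (b i)).sub_const (a i)
        · simp only [Function.update_of_ne hit, if_neg hit]
          exact hasDerivAt_const _ _
      simpa [Function.update_eq_self, Pi.mul_def] using ha.mul hb
    have h4 : HasDerivAt (fun s => if v ∈ I then pd v g (Function.update b t s) else 0)
        (if v ∈ I then pd t (pd v g) b else 0) (b t) := by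
      by_cases hvI : v ∈ I
      · simp only [if_pos hvI]; exact key' b t (hD1 v b)
      · simp only [if_neg hvI]; exact hasDerivAt_const _ _
    have total := (h1.add h2).add ((HasDerivAt.fun_sum hIterm).add h4)
    erw [total.deriv]
    simp only [Finset.sum_add_distrib, mul_ite, mul_one, mul_zero, Finset.sum_ite_eq']
    ring
  have hBfun : dSnd t (dSnd v (canDiv I J g))
      = fun a b => -(pd t (pd v g) b) + ((∑ i ∈ I, pd t (pd v (pd i g)) b * (b i - a i))
          + ((if t ∈ I then pd v (pd t g) b else 0)
            + (if v ∈ I then pd t (pd v g) b else 0))) := by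
    funext a b; exact hB a b
  -- Step C: derivative in the first argument, at the diagonal
  have hC : dFst u (dSnd t (dSnd v (canDiv I J g))) r r
      = -(if u ∈ I then pd t (pd v (pd u g)) r else 0) := by
    rw [hBfun]
    simp only [dFst]
    have hterm : ∀ i ∈ I, HasDerivAt
        (fun s => pd t (pd v (pd i g)) r * (r i - Function.update r u s i))
        (if i = u then -(pd t (pd v (pd i g)) r) else 0) (r u) := by
      intro i _
      rcases eq_or_ne i u with rfl | hiu
      · simp only [if_pos rfl, Function.update_self]
        simpa using HasDerivAt.const_mul (pd t (pd v (pd i g)) r)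
          ((hasDerivAt_id (r i)).const_sub (r i))
      · simp only [if_neg hiu, Function.update_of_ne hiu]
        exact hasDerivAt_const _ _
    have total := (hasDerivAt_const (r u)
        (-(pd t (pd v g) r))).add ((HasDerivAt.fun_sum hterm).add (hasDerivAt_const (r u)
          ((if t ∈ I then pd v (pd t g) r else 0) + (if v ∈ I then pd t (pd v g) r else 0))))
    erw [total.deriv]
    simp only [Finset.sum_ite_eq']
    split_ifs <;> ring
  constructor
  · intro huI
    rw [hC, if_pos huI]
    have e1 : pder v g = pd v g := funext (pder_eq hgd v)
    have e2 : pder u (pder v g) = pd u (pd v g) := by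
      rw [e1]; exact funext (pder_eq (hD1 v) u)
    have e3 : pder t (pder u (pder v g)) r = pd t (pd u (pd v g)) r := by
      rw [e2]; exact pder_eq (hD2 u v) t r
    rw [e3, pd_comm hg v u]
  · intro huJ
    have huI : u ∉ I := fun h => Finset.disjoint_left.mp hdisj h huJ
    rw [hC, if_neg huI, neg_zero]
end

section
/- For all indices s, t, u, v ∈ {1,…,n} and all r ∈ ℝ^n: if u ∈ I then D[u | s t v](r) = −∂_s∂_t∂_u∂_v g(r), and if u ∈ J then D[u | s t v](r) = 0. (This is the coordinate content of equation (dm2) in Theorem 4.2: τ(Φ(Z), ∇^{E′}_X∇^{E′}_Y Φ′(W)) = −½ D_M[Z | X Y W]; in particular the fourth derivative of a generating function is directly expressed by the canonical divergence.) -/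
section helpers

variable {n : ℕ}

private lemma hasDerivAt_update_line (b : Fin n → ℝ) (v : Fin n) (σ₀ : ℝ) :
    HasDerivAt (fun σ : ℝ => Function.update b v σ) (Pi.single v (1:ℝ)) σ₀ := by
  have h1 : (fun σ : ℝ => Function.update b v σ)
      = fun σ : ℝ => b + (σ - b v) • (Pi.single v 1 : Fin n → ℝ) := by
    funext σ j
    by_cases h : j = v
    · subst h; simp
    · simp [Function.update_apply, h, Pi.single_apply]
  rw [h1]
  have := (((hasDerivAt_id σ₀).sub_const (b v)).smul_const ((Pi.single v 1 : Fin n → ℝ))).const_add b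
  simpa using this

private lemma hasDerivAt_comp_update {h : (Fin n → ℝ) → ℝ} (hh : Differentiable ℝ h)
    (b : Fin n → ℝ) (v : Fin n) :
    HasDerivAt (fun σ => h (Function.update b v σ)) (fderiv ℝ h b (Pi.single v 1)) (b v) := by
  have h2 := hasDerivAt_update_line b v (b v)
  have h3 : HasFDerivAt h (fderiv ℝ h b) (Function.update b v (b v)) := by
    rw [Function.update_eq_self]; exact (hh b).hasFDerivAt
  exact h3.comp_hasDerivAt (b v) h2

private lemma pder_eq_fderiv {h : (Fin n → ℝ) → ℝ} (hh : Differentiable ℝ h)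
    (k : Fin n) (a : Fin n → ℝ) :
    pder k h a = fderiv ℝ h a (Pi.single k 1) :=
  (hasDerivAt_comp_update hh a k).deriv

private lemma hasDerivAt_pder {h : (Fin n → ℝ) → ℝ} (hh : Differentiable ℝ h)
    (b : Fin n → ℝ) (v : Fin n) :
    HasDerivAt (fun σ => h (Function.update b v σ)) (pder v h b) (b v) := by
  rw [pder_eq_fderiv hh]; exact hasDerivAt_comp_update hh b v

private lemma pder_contDiff {h : (Fin n → ℝ) → ℝ} (hh : ContDiff ℝ (⊤:ℕ∞) h) (k : Fin n) :
    ContDiff ℝ (⊤:ℕ∞) (pder k h) := by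
  have he : pder k h = fun a => fderiv ℝ h a (Pi.single k 1) :=
    funext fun a => pder_eq_fderiv (hh.differentiable (by simp)) k a
  rw [he]
  exact (hh.fderiv_right (m := (⊤:ℕ∞)) (by exact_mod_cast le_top)).clm_apply contDiff_const

private lemma pder_comm {h : (Fin n → ℝ) → ℝ} (hh : ContDiff ℝ (⊤:ℕ∞) h)
    (j k : Fin n) : pder j (pder k h) = pder k (pder j h) := by
  funext a
  have hd : Differentiable ℝ h := hh.differentiable (by simp)
  have hd' : Differentiable ℝ (fderiv ℝ h) := (hh.fderiv_right (m := (⊤:ℕ∞)) (by exact_mod_cast le_top)).differentiable (by simp)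
  have key : ∀ p q : Fin n, pder p (pder q h) a
      = fderiv ℝ (fderiv ℝ h) a (Pi.single p 1) (Pi.single q 1) := by
    intro p q
    have h1 : pder q h = fun x => fderiv ℝ h x (Pi.single q 1) :=
      funext fun x => pder_eq_fderiv hd q x
    rw [pder_eq_fderiv ((pder_contDiff hh q).differentiable (by simp)) p a, h1,
      fderiv_clm_apply (hd' a) (differentiableAt_const (Pi.single q (1:ℝ)))]
    simp
  rw [key j k, key k j]
  exact second_derivative_symmetric (fun y => (hd y).hasFDerivAt) (hd' a).hasFDerivAt _ _

private lemma hasDerivAt_update_apply (b : Fin n → ℝ) (v j : Fin n) (σ₀ : ℝ) :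
    HasDerivAt (fun σ : ℝ => Function.update b v σ j) (if j = v then (1:ℝ) else 0) σ₀ := by
  by_cases h : j = v
  · subst h
    simp only [Function.update_self, if_pos rfl]
    exact hasDerivAt_id σ₀
  · simp only [Function.update_of_ne h, if_neg h]
    exact hasDerivAt_const _ _

end helpers

theorem divergence_fourth_derivative {n : ℕ} (I J : Finset (Fin n))
    (hdisj : Disjoint I J) (hunion : I ∪ J = Finset.univ)
    (g : (Fin n → ℝ) → ℝ) (hg : ContDiff ℝ (⊤ : ℕ∞) g)
    (s t u v : Fin n) (r : Fin n → ℝ) :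
    (u ∈ I → dFst u (dSnd s (dSnd t (dSnd v (canDiv I J g)))) r r
        = -(pder s (pder t (pder u (pder v g))) r)) ∧
    (u ∈ J → dFst u (dSnd s (dSnd t (dSnd v (canDiv I J g)))) r r = 0) := by
  have hgd : Differentiable ℝ g := hg.differentiable (by simp)
  have hc1 : ∀ k, ContDiff ℝ (⊤:ℕ∞) (pder k g) := fun k => pder_contDiff hg k
  have hd1 : ∀ k, Differentiable ℝ (pder k g) :=
    fun k => (hc1 k).differentiable (by simp)
  have hc2 : ∀ k j, ContDiff ℝ (⊤:ℕ∞) (pder k (pder j g)) :=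
    fun k j => pder_contDiff (hc1 j) k
  have hd2 : ∀ k j, Differentiable ℝ (pder k (pder j g)) :=
    fun k j => (hc2 k j).differentiable (by simp)
  have hc3 : ∀ l k j, ContDiff ℝ (⊤:ℕ∞) (pder l (pder k (pder j g))) :=
    fun l k j => pder_contDiff (hc2 k j) l
  have hd3 : ∀ l k j, Differentiable ℝ (pder l (pder k (pder j g))) :=
    fun l k j => (hc3 l k j).differentiable (by simp)
  -- Step 1
  have hA : ∀ a b : Fin n → ℝ, dSnd v (canDiv I J g) a b =
      (if v ∈ J then pder v g a else 0) - pder v g b + (if v ∈ I then pder v g b else 0)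
        + ∑ i ∈ I, pder v (pder i g) b * (b i - a i) := by
    intro a b
    have c1 : HasDerivAt (fun σ => g a - g (Function.update b v σ)) (-(pder v g b)) (b v) :=
      (hasDerivAt_pder hgd b v).const_sub (g a)
    have c2 : HasDerivAt (fun σ => ∑ j ∈ J, pder j g a * (a j - Function.update b v σ j))
        (∑ j ∈ J, pder j g a * -(if j = v then (1:ℝ) else 0)) (b v) := by
      apply HasDerivAt.fun_sum
      intro j _
      exact ((hasDerivAt_update_apply b v j (b v)).const_sub (a j)).const_mul _
    have c3 : HasDerivAt
        (fun σ => ∑ i ∈ I, pder i g (Function.update b v σ) * (Function.update b v σ i - a i))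
        (∑ i ∈ I, (pder v (pder i g) b * (Function.update b v (b v) i - a i)
          + pder i g (Function.update b v (b v)) * (if i = v then (1:ℝ) else 0))) (b v) := by
      apply HasDerivAt.fun_sum
      intro i _
      exact (hasDerivAt_pder (hd1 i) b v).mul
        ((hasDerivAt_update_apply b v i (b v)).sub_const (a i))
    simp only [Function.update_eq_self] at c3
    have key := (c1.sub c2).add c3
    have hval : dSnd v (canDiv I J g) a b = _ := key.deriv
    rw [hval]
    simp only [mul_neg, mul_ite, mul_one, mul_zero, Finset.sum_neg_distrib,
      Finset.sum_add_distrib, Finset.sum_ite_eq']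
    ring
  -- Step 2
  have hB : ∀ a b : Fin n → ℝ, dSnd t (dSnd v (canDiv I J g)) a b =
      -(pder t (pder v g) b) + (if v ∈ I then pder t (pder v g) b else 0)
        + (if t ∈ I then pder v (pder t g) b else 0)
        + ∑ i ∈ I, pder t (pder v (pder i g)) b * (b i - a i) := by
    intro a b
    have hfun : (fun σ => dSnd v (canDiv I J g) a (Function.update b t σ))
        = fun σ => (if v ∈ J then pder v g a else 0) - pder v g (Function.update b t σ)
            + (if v ∈ I then pder v g (Function.update b t σ) else 0)
            + ∑ i ∈ I, pder v (pder i g) (Function.update b t σ)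
                * (Function.update b t σ i - a i) :=
      funext fun σ => hA a _
    have c1 : HasDerivAt
        (fun σ => (if v ∈ J then pder v g a else 0) - pder v g (Function.update b t σ))
        (-(pder t (pder v g) b)) (b t) :=
      (hasDerivAt_pder (hd1 v) b t).const_sub _
    have c2 : HasDerivAt (fun σ => if v ∈ I then pder v g (Function.update b t σ) else 0)
        (if v ∈ I then pder t (pder v g) b else 0) (b t) := by
      split_ifs with h
      · exact hasDerivAt_pder (hd1 v) b t
      · exact hasDerivAt_const _ _
    have c3 : HasDerivAt
        (fun σ => ∑ i ∈ I, pder v (pder i g) (Function.update b t σ)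
          * (Function.update b t σ i - a i))
        (∑ i ∈ I, (pder t (pder v (pder i g)) b * (Function.update b t (b t) i - a i)
          + pder v (pder i g) (Function.update b t (b t)) * (if i = t then (1:ℝ) else 0)))
        (b t) := by
      apply HasDerivAt.fun_sum
      intro i _
      exact (hasDerivAt_pder (hd2 v i) b t).mul
        ((hasDerivAt_update_apply b t i (b t)).sub_const (a i))
    simp only [Function.update_eq_self] at c3
    have key := (c1.add c2).add c3
    rw [show dSnd t (dSnd v (canDiv I J g)) a b
        = deriv (fun σ => dSnd v (canDiv I J g) a (Function.update b t σ)) (b t) from rfl,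
        hfun]
    refine key.deriv.trans ?_
    simp only [mul_ite, mul_one, mul_zero, Finset.sum_add_distrib, Finset.sum_ite_eq']
    ring
  -- Step 3
  have hC : ∀ a b : Fin n → ℝ, dSnd s (dSnd t (dSnd v (canDiv I J g))) a b =
      -(pder s (pder t (pder v g)) b)
        + (if v ∈ I then pder s (pder t (pder v g)) b else 0)
        + (if t ∈ I then pder s (pder v (pder t g)) b else 0)
        + (if s ∈ I then pder t (pder v (pder s g)) b else 0)
        + ∑ i ∈ I, pder s (pder t (pder v (pder i g))) b * (b i - a i) := by
    intro a b
    have hfun : (fun σ => dSnd t (dSnd v (canDiv I J g)) a (Function.update b s σ))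
        = fun σ => -(pder t (pder v g) (Function.update b s σ))
            + (if v ∈ I then pder t (pder v g) (Function.update b s σ) else 0)
            + (if t ∈ I then pder v (pder t g) (Function.update b s σ) else 0)
            + ∑ i ∈ I, pder t (pder v (pder i g)) (Function.update b s σ)
                * (Function.update b s σ i - a i) :=
      funext fun σ => hB a _
    have c1 : HasDerivAt (fun σ => -(pder t (pder v g) (Function.update b s σ)))
        (-(pder s (pder t (pder v g)) b)) (b s) :=
      (hasDerivAt_pder (hd2 t v) b s).neg
    have c2 : HasDerivAt
        (fun σ => if v ∈ I then pder t (pder v g) (Function.update b s σ) else 0)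
        (if v ∈ I then pder s (pder t (pder v g)) b else 0) (b s) := by
      split_ifs with h
      · exact hasDerivAt_pder (hd2 t v) b s
      · exact hasDerivAt_const _ _
    have c2' : HasDerivAt
        (fun σ => if t ∈ I then pder v (pder t g) (Function.update b s σ) else 0)
        (if t ∈ I then pder s (pder v (pder t g)) b else 0) (b s) := by
      split_ifs with h
      · exact hasDerivAt_pder (hd2 v t) b s
      · exact hasDerivAt_const _ _
    have c3 : HasDerivAt
        (fun σ => ∑ i ∈ I, pder t (pder v (pder i g)) (Function.update b s σ)
          * (Function.update b s σ i - a i))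
        (∑ i ∈ I, (pder s (pder t (pder v (pder i g))) b * (Function.update b s (b s) i - a i)
          + pder t (pder v (pder i g)) (Function.update b s (b s))
              * (if i = s then (1:ℝ) else 0)))
        (b s) := by
      apply HasDerivAt.fun_sum
      intro i _
      exact (hasDerivAt_pder (hd3 t v i) b s).mul
        ((hasDerivAt_update_apply b s i (b s)).sub_const (a i))
    simp only [Function.update_eq_self] at c3
    have key := ((c1.add c2).add c2').add c3
    rw [show dSnd s (dSnd t (dSnd v (canDiv I J g))) a b
        = deriv (fun σ => dSnd t (dSnd v (canDiv I J g)) a (Function.update b s σ)) (b s)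
        from rfl, hfun]
    refine key.deriv.trans ?_
    simp only [mul_ite, mul_one, mul_zero, Finset.sum_add_distrib, Finset.sum_ite_eq']
    ring
  -- Step 4
  have hD : dFst u (dSnd s (dSnd t (dSnd v (canDiv I J g)))) r r
      = -(if u ∈ I then pder s (pder t (pder v (pder u g))) r else 0) := by
    have hfun : (fun τ => dSnd s (dSnd t (dSnd v (canDiv I J g))) (Function.update r u τ) r)
        = fun τ => -(pder s (pder t (pder v g)) r)
            + (if v ∈ I then pder s (pder t (pder v g)) r else 0)
            + (if t ∈ I then pder s (pder v (pder t g)) r else 0)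
            + (if s ∈ I then pder t (pder v (pder s g)) r else 0)
            + ∑ i ∈ I, pder s (pder t (pder v (pder i g))) r
                * (r i - Function.update r u τ i) :=
      funext fun τ => hC _ r
    have csum : HasDerivAt
        (fun τ => ∑ i ∈ I, pder s (pder t (pder v (pder i g))) r
          * (r i - Function.update r u τ i))
        (∑ i ∈ I, pder s (pder t (pder v (pder i g))) r
          * -(if i = u then (1:ℝ) else 0)) (r u) := by
      apply HasDerivAt.fun_sum
      intro i _
      exact ((hasDerivAt_update_apply r u i (r u)).const_sub (r i)).const_mul _
    have key := (hasDerivAt_const (r u)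
      (-(pder s (pder t (pder v g)) r)
        + (if v ∈ I then pder s (pder t (pder v g)) r else 0)
        + (if t ∈ I then pder s (pder v (pder t g)) r else 0)
        + (if s ∈ I then pder t (pder v (pder s g)) r else 0))).add csum
    rw [show dFst u (dSnd s (dSnd t (dSnd v (canDiv I J g)))) r r
        = deriv (fun τ => dSnd s (dSnd t (dSnd v (canDiv I J g)))
            (Function.update r u τ) r) (r u) from rfl, hfun]
    refine key.deriv.trans ?_
    simp only [mul_neg, mul_ite, mul_one, mul_zero, Finset.sum_neg_distrib,
      Finset.sum_ite_eq']
    ring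
  constructor
  · intro hu
    rw [hD, if_pos hu, pder_comm hg v u]
  · intro hu
    rw [hD, if_neg (fun h => (Finset.disjoint_left.mp hdisj h hu)), neg_zero]
end

section
/- (Malgrange's division theorem.) Let f(t, x) be a real-valued C^∞ function defined on an open neighborhood of the origin of ℝ^{n+1}, where t ∈ ℝ and x ∈ ℝ^n, and let P(t) = Σ_{i=0}^d λ_i t^i be a real polynomial of degree d (λ_d ≠ 0). Then there exist a C^∞ function Q(t, x) on an open neighborhood of the origin of ℝ^{n+1} and C^∞ functions r_i(x) (0 ≤ i ≤ d−1) on an open neighborhood of the origin of ℝ^n such that f(t, x) = Q(t, x)·P(t) + Σ_{i=0}^{d−1} r_i(x)·t^i on a neighborhood of the origin. -/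
open MeasureTheory Metric Set intervalIntegral


set_option synthInstance.maxHeartbeats 1000000 in
private lemma smooth_param_integral {E : Type} [NormedAddCommGroup E] [NormedSpace ℝ E]
    [FiniteDimensional ℝ E] :
    ∀ (m : ℕ) {F : Type} [NormedAddCommGroup F] [NormedSpace ℝ F] [CompleteSpace F]
      (k : ℝ × E → F), ContDiff ℝ (⊤ : ℕ∞) k →
      ContDiff ℝ (m : ℕ) (fun p : E => ∫ s in (0:ℝ)..1, k (s, p))
  | 0, F, _, _, _, k, hk => by
    rw [Nat.cast_zero, contDiff_zero]
    exact continuous_parametric_intervalIntegral_of_continuous'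
      (f := fun (x : E) (t : ℝ) => k (t, x)) (μ := volume)
      (by exact hk.continuous.comp (continuous_snd.prodMk continuous_fst)) 0 1
  | (m + 1), F, _, _, _, k, hk => by
    -- the partial derivative in the parameter
    set k' : ℝ × E → (E →L[ℝ] F) := fun q => fderiv ℝ (fun y => k (q.1, y)) q.2 with hk'def
    have hk' : ContDiff ℝ (⊤ : ℕ∞) k' := by
      apply ContDiff.fderiv (f := fun (q : ℝ × E) (y : E) => k (q.1, y)) (g := Prod.snd)
      · exact hk.comp ((contDiff_fst.comp contDiff_fst).prodMk contDiff_snd)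
      · exact contDiff_snd
      · exact le_of_eq (by rfl)
    have hdiff : ∀ (t : ℝ) (x : E), DifferentiableAt ℝ (fun y => k (t, y)) x := by
      intro t x
      exact ((hk.comp ((contDiff_const (c := t)).prodMk contDiff_id)).differentiable (by simp)) x
    have key : ∀ p₀ : E, HasFDerivAt (fun p : E => ∫ s in (0:ℝ)..1, k (s, p))
        (∫ s in (0:ℝ)..1, k' (s, p₀)) p₀ := by
      intro p₀
      obtain ⟨C, hC⟩ := (isCompact_uIcc.prod (isCompact_closedBall p₀ 1)).exists_bound_of_continuousOn
        (hk'.continuous.continuousOn (s := uIcc (0:ℝ) 1 ×ˢ closedBall p₀ 1))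
      apply intervalIntegral.hasFDerivAt_integral_of_dominated_of_fderiv_le (hs := ball_mem_nhds p₀ one_pos)
        (bound := fun _ => C) (F' := fun (x : E) (t : ℝ) => k' (t, x))
      · filter_upwards with x
        exact (hk.continuous.comp (continuous_id.prodMk continuous_const)).aestronglyMeasurable
      · exact (hk.continuous.comp (continuous_id.prodMk continuous_const)).intervalIntegrable 0 1
      · exact (hk'.continuous.comp (continuous_id.prodMk continuous_const)).aestronglyMeasurable
      · filter_upwards with t ht x hx
        exact hC (t, x) ⟨uIoc_subset_uIcc ht, ball_subset_closedBall hx⟩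
      · exact intervalIntegrable_const
      · filter_upwards with t ht x hx
        exact (hdiff t x).hasFDerivAt
    rw [show ((m + 1 : ℕ) : WithTop ℕ∞) = (m : ℕ) + 1 by push_cast; rfl]
    rw [contDiff_succ_iff_fderiv]
    refine ⟨fun p₀ => (key p₀).differentiableAt, by simp, ?_⟩
    have : (fderiv ℝ fun p : E => ∫ s in (0:ℝ)..1, k (s, p))
        = fun p₀ => ∫ s in (0:ℝ)..1, k' (s, p₀) := funext fun p₀ => (key p₀).fderiv
    rw [this]
    exact smooth_param_integral m k' hk'
private lemma hadamard {E : Type} [NormedAddCommGroup E] [NormedSpace ℝ E]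
    [FiniteDimensional ℝ E] {f : ℝ × E → ℝ} (hf : ContDiff ℝ (⊤ : ℕ∞) f) :
    ∃ g : ℝ × E → ℝ, ContDiff ℝ (⊤ : ℕ∞) g ∧ ∀ p : ℝ × E, f p = f (0, p.2) + p.1 * g p := by
  set D1 : ℝ × E → ℝ := fun q => fderiv ℝ f q (1, 0) with hD1
  have hD1s : ContDiff ℝ (⊤ : ℕ∞) D1 := by
    exact ContDiff.clm_apply (hf.fderiv_right (le_of_eq rfl)) contDiff_const
  set k : ℝ × (ℝ × E) → ℝ := fun q => D1 (q.1 * q.2.1, q.2.2) with hk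
  have hks : ContDiff ℝ (⊤ : ℕ∞) k :=
    hD1s.comp ((contDiff_fst.mul (contDiff_fst.comp contDiff_snd)).prodMk
      (contDiff_snd.comp contDiff_snd))
  refine ⟨fun p => ∫ s in (0:ℝ)..1, k (s, p), ?_, ?_⟩
  · rw [contDiff_infty]
    intro m
    exact smooth_param_integral m k hks
  · rintro ⟨t, x⟩
    have hderiv : ∀ s ∈ uIcc (0:ℝ) 1,
        HasDerivAt (fun s : ℝ => f (s * t, x)) (t * k (s, (t, x))) s := by
      intro s _
      have h1 : HasDerivAt (fun s : ℝ => (s * t, x)) ((t, 0) : ℝ × E) s := by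
        exact (hasDerivAt_mul_const t).prodMk (hasDerivAt_const s x)
      have h2 : HasFDerivAt f (fderiv ℝ f (s * t, x)) (s * t, x) :=
        (hf.differentiable (by simp) _).hasFDerivAt
      have := h2.comp_hasDerivAt s h1
      refine HasDerivAt.congr_deriv this ?_
      have : ((t, 0) : ℝ × E) = t • ((1 : ℝ), (0 : E)) := by simp
      rw [this, ContinuousLinearMap.map_smul]
      simp [k, D1, smul_eq_mul, mul_comm]
    have := intervalIntegral.integral_eq_sub_of_hasDerivAt hderiv
      (by exact (continuous_const.mul (hks.continuous.comp (continuous_id.prodMk continuous_const))).intervalIntegrable 0 1)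
    rw [intervalIntegral.integral_const_mul] at this
    simp only [one_mul, zero_mul] at this
    simp only []
    linarith [this]
private lemma taylor_div {E : Type} [NormedAddCommGroup E] [NormedSpace ℝ E]
    [FiniteDimensional ℝ E] (k : ℕ) :
    ∀ (f : ℝ × E → ℝ), ContDiff ℝ (⊤ : ℕ∞) f →
    ∃ (c : ℕ → E → ℝ) (R : ℝ × E → ℝ), (∀ i, ContDiff ℝ (⊤ : ℕ∞) (c i)) ∧
      ContDiff ℝ (⊤ : ℕ∞) R ∧
      ∀ p : ℝ × E, f p = (∑ i ∈ Finset.range k, c i p.2 * p.1 ^ i) + p.1 ^ k * R p := by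
  induction k with
  | zero =>
    intro f hf
    exact ⟨fun _ _ => 0, f, fun _ => contDiff_const, hf, fun p => by simp⟩
  | succ k ih =>
    intro f hf
    obtain ⟨c, R, hc, hR, hfR⟩ := ih f hf
    obtain ⟨g, hg, hRg⟩ := hadamard hR
    refine ⟨fun i => if i = k then (fun x => R (0, x)) else c i, g, ?_, hg, ?_⟩
    · intro i
      by_cases h : i = k
      · simp only [h, if_pos rfl]
        exact hR.comp (contDiff_const.prodMk contDiff_id)
      · simp only [if_neg h]; exact hc i
    · intro p
      rw [Finset.sum_range_succ]
      simp only [if_pos rfl]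
      have : ∀ i ∈ Finset.range k,
          (if i = k then (fun x => R (0, x)) else c i) p.2 * p.1 ^ i = c i p.2 * p.1 ^ i := by
        intro i hi
        rw [if_neg (Nat.ne_of_lt (Finset.mem_range.mp hi))]
      rw [Finset.sum_congr rfl this, hfR p, hRg p]
      simp only [if_true, eq_self_iff_true]
      ring
private lemma smooth_extend {E : Type} [NormedAddCommGroup E] [NormedSpace ℝ E]
    [FiniteDimensional ℝ E] {f : E → ℝ} {W : Set E} (hW : IsOpen W) (h0 : (0 : E) ∈ W)
    (hf : ContDiffOn ℝ (⊤ : ℕ∞) f W) :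
    ∃ (ε : ℝ) (g : E → ℝ), 0 < ε ∧ ball (0 : E) ε ⊆ W ∧ ContDiff ℝ (⊤ : ℕ∞) g ∧
      ∀ p ∈ ball (0 : E) ε, g p = f p := by
  obtain ⟨ε, εpos, hε⟩ := Metric.isOpen_iff.mp hW 0 h0
  have h1 : (0:ℝ) < ε / 4 := by linarith
  have h2 : ε / 4 < ε / 2 := by linarith
  let χ : ContDiffBump (0 : E) := ⟨ε / 4, ε / 2, h1, h2⟩
  refine ⟨ε / 4, fun p => χ p * f p, h1, fun p hp => hε (by
      simp only [mem_ball] at hp ⊢; linarith), ?_, ?_⟩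
  · rw [contDiff_iff_contDiffAt]
    intro p
    by_cases hp : p ∈ W
    · exact (χ.contDiff.contDiffAt).mul (hf.contDiffAt (hW.mem_nhds hp))
    · have hsp : p ∉ tsupport (χ : E → ℝ) := by
        rw [χ.tsupport_eq]
        intro hmem
        exact hp (hε (by simp only [mem_closedBall] at hmem; simp only [mem_ball]; linarith [show χ.rOut = ε / 2 from rfl]))
      have : ∀ᶠ q in nhds p, χ q * f q = 0 := by
        filter_upwards [(isOpen_compl_iff.mpr (isClosed_tsupport _)).mem_nhds hsp] with q hq
        rw [image_eq_zero_of_notMem_tsupport hq, zero_mul]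
      exact ContDiffAt.congr_of_eventuallyEq contDiffAt_const this
  · intro p hp
    show χ p * f p = f p
    rw [χ.one_of_mem_closedBall (ball_subset_closedBall hp), one_mul]
theorem malgrange_division {n : ℕ} (f : ℝ × (Fin n → ℝ) → ℝ)
    (W : Set (ℝ × (Fin n → ℝ))) (hW : IsOpen W)
    (h0 : (0 : ℝ × (Fin n → ℝ)) ∈ W)
    (hf : ContDiffOn ℝ (⊤ : ℕ∞) f W)
    (d : ℕ) (lam : ℕ → ℝ) (hlam : lam d ≠ 0) :
    ∃ (U : Set (ℝ × (Fin n → ℝ))) (V : Set (Fin n → ℝ))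
      (Q : ℝ × (Fin n → ℝ) → ℝ) (r : ℕ → (Fin n → ℝ) → ℝ),
      IsOpen U ∧ (0 : ℝ × (Fin n → ℝ)) ∈ U ∧ U ⊆ W ∧
      IsOpen V ∧ (0 : Fin n → ℝ) ∈ V ∧
      ContDiffOn ℝ (⊤ : ℕ∞) Q U ∧
      (∀ i < d, ContDiffOn ℝ (⊤ : ℕ∞) (r i) V) ∧
      (∀ q ∈ U, q.2 ∈ V ∧
        f q = Q q * (∑ i ∈ Finset.range (d + 1), lam i * q.1 ^ i)
          + ∑ i ∈ Finset.range d, r i q.2 * q.1 ^ i) := by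
  have hex : ∃ i, lam i ≠ 0 := ⟨d, hlam⟩
  set k := Nat.find hex with hkdef
  have hlamk : lam k ≠ 0 := Nat.find_spec hex
  have hkd : k ≤ d := Nat.find_min' hex hlam
  have hlam0 : ∀ i < k, lam i = 0 := fun i hi => not_not.mp (Nat.find_min hex hi)
  set u : ℝ → ℝ := fun t => ∑ i ∈ Finset.range (d + 1 - k), lam (i + k) * t ^ i with hudef
  have hu_smooth : ContDiff ℝ (⊤ : ℕ∞) u :=
    ContDiff.sum fun i _ => contDiff_const.mul (contDiff_id.pow i)
  have hk' : 0 < d + 1 - k := Nat.sub_pos_of_lt (Nat.lt_succ_of_le hkd)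
  have hu0 : u 0 = lam k := by
    show (∑ i ∈ Finset.range (d + 1 - k), lam (i + k) * (0:ℝ) ^ i) = lam k
    rw [Finset.sum_eq_single_of_mem 0 (Finset.mem_range.mpr hk')]
    · simp
    · intro i _ hi
      simp [zero_pow hi]
  have hPu : ∀ t : ℝ, (∑ i ∈ Finset.range (d + 1), lam i * t ^ i) = t ^ k * u t := by
    intro t
    rw [hudef, Finset.mul_sum]
    have h1 : ∀ i ∈ Finset.range (d + 1 - k),
        t ^ k * (lam (i + k) * t ^ i) = lam (k + i) * t ^ (k + i) := by
      intro i _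
      rw [pow_add, add_comm i k]
      ring
    rw [Finset.sum_congr rfl h1]
    rw [← Finset.sum_Ico_eq_sum_range (f := fun j => lam j * t ^ j) (m := k) (n := d + 1)]
    rw [Finset.range_eq_Ico, ← Finset.sum_Ico_consecutive _ (Nat.zero_le k) (by omega)]
    have h2 : ∑ i ∈ Finset.Ico 0 k, lam i * t ^ i = 0 := by
      apply Finset.sum_eq_zero
      intro i hi
      rw [hlam0 i (Finset.mem_Ico.mp hi).2, zero_mul]
    rw [h2, zero_add]
  have hune : u 0 ≠ 0 := by rw [hu0]; exact hlamk
  obtain ⟨δ, δpos, hδ⟩ := Metric.isOpen_iff.mp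
    (isOpen_compl_singleton.preimage hu_smooth.continuous) 0 (by simpa using hune)
  obtain ⟨ε, g, εpos, hεW, hg, hgf⟩ := smooth_extend hW h0 hf
  obtain ⟨c, R, hc, hR, hfR⟩ := taylor_div k g hg
  set U : Set (ℝ × (Fin n → ℝ)) := ball 0 ε ∩ (Prod.fst ⁻¹' ball (0 : ℝ) δ) with hUdef
  have hune' : ∀ q ∈ U, u q.1 ≠ 0 := by
    intro q hq
    have := hδ hq.2
    simpa using this
  refine ⟨U, univ, fun p => R p * (u p.1)⁻¹,
    fun i => if i < k then c i else fun _ => 0, ?_, ?_, ?_, isOpen_univ, mem_univ _, ?_, ?_, ?_⟩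
  · exact (isOpen_ball).inter (isOpen_ball.preimage continuous_fst)
  · exact ⟨mem_ball_self εpos, mem_ball_self δpos⟩
  · exact fun q hq => hεW hq.1
  · exact (hR.contDiffOn).mul
      (((hu_smooth.comp contDiff_fst).contDiffOn).inv hune')
  · intro i _
    by_cases h : i < k
    · simp only [if_pos h]
      exact (hc i).contDiffOn
    · simp only [if_neg h]
      exact contDiffOn_const
  · intro q hq
    refine ⟨mem_univ _, ?_⟩
    have hsum : ∑ i ∈ Finset.range d,
        (if i < k then c i else fun _ => 0) q.2 * q.1 ^ i
        = ∑ i ∈ Finset.range k, c i q.2 * q.1 ^ i := by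
      rw [← Finset.sum_subset (Finset.range_subset_range.mpr hkd)]
      · apply Finset.sum_congr rfl
        intro i hi
        rw [if_pos (Finset.mem_range.mp hi)]
      · intro i _ hi
        rw [if_neg (by simpa using hi), zero_mul]
    rw [hsum, ← hgf q hq.1, hfR q, hPu q.1]
    have hu : u q.1 ≠ 0 := hune' q hq
    field_simp
    ring
end

section
/- Let U₂ be an open neighborhood of w̄ in ℝ^{n−1}, f : U₂ → ℝ a C^∞ function, and F a real-valued C^∞ function on an open neighborhood of (f(w̄), w̄) in ℝ × ℝ^{n−1} such that ∂F/∂t(f(w), w) = 0 for every w near w̄ (where t denotes the first variable). Then there exist an open neighborhood N of (f(w̄), w̄), an open neighborhood U₂′ ⊆ U₂ of w̄, a C^∞ function Q on N, and a C^∞ function k on U₂′ such that F(t, w) = (t − f(w))²·Q(t, w) + k(w) for all (t, w) ∈ N. -/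
open Metric Set MeasureTheory intervalIntegral
open scoped Convolution


/-!
Statement 11: the quadratic division lemma (intermediate claim in the proof of
Theorem 3.3): if `∂F/∂t` vanishes along the graph `t = f(w)`, then
`F(t,w) = (t - f(w))² Q(t,w) + k(w)` near `(f(w̄), w̄)`.
-/

theorem smooth_extension {E : Type*} [NormedAddCommGroup E] [NormedSpace ℝ E]
    [FiniteDimensional ℝ E] {W : Set E} (hW : IsOpen W) {c : E} (hc : c ∈ W)
    {F : E → ℝ} (hF : ContDiffOn ℝ (⊤ : ℕ∞) F W) :
    ∃ G : E → ℝ, ContDiff ℝ (⊤ : ℕ∞) G ∧ ∀ᶠ q in nhds c, G q = F q := by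
  obtain ⟨ε, hε, hball⟩ : ∃ ε > 0, closedBall c ε ⊆ W :=
    (Metric.nhds_basis_closedBall.mem_iff).1 (hW.mem_nhds hc)
  set χ : ContDiffBump c := ⟨ε / 2, ε, by linarith, by linarith⟩
  refine ⟨W.indicator (fun q => χ q * F q), ?_, ?_⟩
  · rw [← contDiffOn_univ]
    apply contDiffOn_of_locally_contDiffOn
    intro x _
    by_cases hx : x ∈ W
    · refine ⟨W, hW, hx, ?_⟩
      refine ((χ.contDiff.contDiffOn.mul hF).mono inter_subset_right).congr ?_
      intro q hq
      simp [Set.indicator_of_mem hq.2]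
    · refine ⟨(closedBall c ε)ᶜ, isClosed_closedBall.isOpen_compl, fun h => hx (hball h), ?_⟩
      refine (contDiffOn_const (c := (0:ℝ))).congr ?_
      intro q hq
      have hχ : χ q = 0 := by
        by_contra h0
        exact hq.2 (ball_subset_closedBall (χ.support_eq ▸ Function.mem_support.2 h0))
      by_cases h : q ∈ W <;> simp [Set.indicator, h, hχ]
  · have : ball c (ε / 2) ∈ nhds c := ball_mem_nhds c (by linarith)
    filter_upwards [this] with q hq
    have hq' : q ∈ closedBall c (ε/2) := ball_subset_closedBall hq
    have hqW : q ∈ W := hball (closedBall_subset_closedBall (by linarith : ε/2 ≤ ε) hq')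
    have : χ q = 1 := χ.one_of_mem_closedBall hq'
    simp [Set.indicator_of_mem hqW, this]

theorem taylor_quad {V : Type*} [NormedAddCommGroup V] [NormedSpace ℝ V]
    (G : ℝ × V → ℝ) (hG : ContDiff ℝ (⊤ : ℕ∞) G) (a t : ℝ) (w : V) :
    G (t, w) = G (a, w) + (t - a) * (fderiv ℝ G (a, w) (1, 0)) +
      (t - a) ^ 2 * ∫ s in (0:ℝ)..1,
        (1 - s) * (fderiv ℝ (fun q => fderiv ℝ G q (1, 0)) (a + s * (t - a), w) (1, 0)) := by
  set h := t - a with hh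
  set D1 : ℝ × V → ℝ := fun q => fderiv ℝ G q (1, 0) with hD1
  set D2 : ℝ × V → ℝ := fun q => fderiv ℝ D1 q (1, 0) with hD2
  have hD1s : ContDiff ℝ (⊤ : ℕ∞) D1 :=
    (hG.fderiv_right (mod_cast le_top)).clm_apply contDiff_const
  have hD2s : ContDiff ℝ (⊤ : ℕ∞) D2 :=
    (hD1s.fderiv_right (mod_cast le_top)).clm_apply contDiff_const
  set c : ℝ → ℝ × V := fun s => (a + s * h, w) with hc
  have hcd : ∀ s : ℝ, HasDerivAt c (h, (0:V)) s := by
    intro s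
    have h1 : HasDerivAt (fun s : ℝ => (a, w) + s • ((h : ℝ), (0:V)))
        ((1:ℝ) • ((h:ℝ), (0:V))) s := ((hasDerivAt_id s).smul_const _).const_add _
    have : (fun s : ℝ => (a, w) + s • ((h : ℝ), (0:V))) = c := by
      funext s; simp [hc, Prod.ext_iff]
    rw [this] at h1; simpa using h1
  have key : ∀ (Φ : ℝ × V → ℝ), ContDiff ℝ (⊤ : ℕ∞) Φ → ∀ s : ℝ,
      HasDerivAt (fun s => Φ (c s)) (h * fderiv ℝ Φ (c s) (1, 0)) s := by
    intro Φ hΦ s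
    have hd := (hΦ.differentiable (by simp) (c s)).hasFDerivAt.comp_hasDerivAt s (hcd s)
    have : fderiv ℝ Φ (c s) (h, (0:V)) = h * fderiv ℝ Φ (c s) (1, 0) := by
      have : ((h:ℝ), (0:V)) = h • ((1:ℝ), (0:V)) := by simp [Prod.ext_iff]
      rw [this, _root_.map_smul, smul_eq_mul]
    rwa [this] at hd
  set Φ : ℝ → ℝ := fun s => G (c s) + (1 - s) * (h * D1 (c s)) with hΦ
  have hΦd : ∀ s : ℝ, HasDerivAt Φ ((1 - s) * (h ^ 2 * D2 (c s))) s := by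
    intro s
    have h1 := key G hG s
    have h2 := key D1 hD1s s
    have h3 : HasDerivAt (fun s : ℝ => (1 - s)) (-1) s := by
      simpa using (hasDerivAt_id s).const_sub 1
    have h4 : HasDerivAt (fun s => h * D1 (c s)) (h * (h * D2 (c s))) s := h2.const_mul h
    have := h1.add (h3.mul h4)
    refine this.congr_deriv ?_
    simp only [hD1]
    ring
  have hcont : Continuous fun s => (1 - s) * (h ^ 2 * D2 (c s)) := by
    have : Continuous c := by
      apply Continuous.prodMk _ continuous_const
      exact continuous_const.add (continuous_id.mul continuous_const)
    exact (continuous_const.sub continuous_id).mul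
      (continuous_const.mul ((hD2s.continuous).comp this))
  have hint := intervalIntegral.integral_eq_sub_of_hasDerivAt
    (f := Φ) (f' := fun s => (1 - s) * (h ^ 2 * D2 (c s)))
    (a := 0) (b := 1) (fun s _ => hΦd s) (hcont.intervalIntegrable 0 1)
  have hΦ1 : Φ 1 = G (t, w) := by
    simp only [hΦ, hc]
    norm_num [hh]
  have hΦ0 : Φ 0 = G (a, w) + h * D1 (a, w) := by
    simp only [hΦ, hc]
    norm_num
  have hpull : ∫ s in (0:ℝ)..1, (1 - s) * (h ^ 2 * D2 (c s))
      = h ^ 2 * ∫ s in (0:ℝ)..1, (1 - s) * D2 (c s) := by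
    rw [← intervalIntegral.integral_const_mul]
    congr 1; funext s; ring
  rw [hpull, hΦ1, hΦ0] at hint
  have : G (t, w) = G (a, w) + h * D1 (a, w) + h ^ 2 * ∫ s in (0:ℝ)..1, (1 - s) * D2 (c s) := by
    linarith
  simpa [hD1, hD2, hc] using this

theorem quadratic_division_lemma {m : ℕ} (wb : Fin m → ℝ)
    (U₂ : Set (Fin m → ℝ)) (hU₂ : IsOpen U₂) (hwb : wb ∈ U₂)
    (f : (Fin m → ℝ) → ℝ) (hf : ContDiffOn ℝ (⊤ : ℕ∞) f U₂)
    (F : ℝ × (Fin m → ℝ) → ℝ)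
    (W : Set (ℝ × (Fin m → ℝ))) (hW : IsOpen W) (hmem : (f wb, wb) ∈ W)
    (hF : ContDiffOn ℝ (⊤ : ℕ∞) F W)
    (hcrit : ∀ᶠ w in nhds wb, deriv (fun t => F (t, w)) (f w) = 0) :
    ∃ (N : Set (ℝ × (Fin m → ℝ))) (U₂' : Set (Fin m → ℝ))
      (Q : ℝ × (Fin m → ℝ) → ℝ) (k : (Fin m → ℝ) → ℝ),
      IsOpen N ∧ (f wb, wb) ∈ N ∧ N ⊆ W ∧
      IsOpen U₂' ∧ wb ∈ U₂' ∧ U₂' ⊆ U₂ ∧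
      ContDiffOn ℝ (⊤ : ℕ∞) Q N ∧ ContDiffOn ℝ (⊤ : ℕ∞) k U₂' ∧
      ∀ q ∈ N, F q = (q.1 - f q.2) ^ 2 * Q q + k q.2 := by
  classical
  set c0 : ℝ × (Fin m → ℝ) := (f wb, wb) with hc0
  -- global smooth extensions
  obtain ⟨G, hG, hGF⟩ := smooth_extension hW hmem hF
  obtain ⟨ft, hft, hftf⟩ := smooth_extension hU₂ hwb hf
  -- partial derivatives
  set D1 : ℝ × (Fin m → ℝ) → ℝ := fun q => fderiv ℝ G q (1, 0) with hD1
  set D2 : ℝ × (Fin m → ℝ) → ℝ := fun q => fderiv ℝ D1 q (1, 0) with hD2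
  have hD1s : ContDiff ℝ (⊤ : ℕ∞) D1 :=
    (hG.fderiv_right (mod_cast le_top)).clm_apply contDiff_const
  have hD2s : ContDiff ℝ (⊤ : ℕ∞) D2 :=
    (hD1s.fderiv_right (mod_cast le_top)).clm_apply contDiff_const
  -- the smooth function Q, defined as a convolution in order to get smoothness
  set ψ : ContDiffBump (0:ℝ) := ⟨2, 3, two_pos, by norm_num⟩ with hψ
  set g : (ℝ × (Fin m → ℝ)) → ℝ → ℝ :=
    fun p y => ψ y * D2 (ft p.2 + (-y) * (p.1 - ft p.2), p.2) with hg
  set φ : ℝ → ℝ := (Set.Ioc (0:ℝ) 1).indicator (fun s => 1 - s) with hφ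
  set Q : ℝ × (Fin m → ℝ) → ℝ :=
    fun p => (φ ⋆[ContinuousLinearMap.mul ℝ ℝ, volume] g p) 0 with hQdef
  have hφint : MeasureTheory.LocallyIntegrable φ volume := by
    refine MeasureTheory.Integrable.locallyIntegrable ?_
    rw [hφ]
    refine (MeasureTheory.IntegrableOn.integrable_indicator ?_ measurableSet_Ioc)
    exact (continuous_const.sub continuous_id).integrableOn_Ioc
  have hgsupp : ∀ (p : ℝ × (Fin m → ℝ)) (x : ℝ), p ∈ (univ : Set (ℝ × (Fin m → ℝ))) → x ∉ closedBall (0:ℝ) 3 →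
      g p x = 0 := by
    intro p x _ hx
    have : ψ x = 0 := by
      by_contra h0
      exact hx (ball_subset_closedBall (ψ.support_eq ▸ Function.mem_support.2 h0))
    simp [hg, this]
  have hgsmooth : ContDiffOn ℝ (⊤ : ℕ∞) (Function.uncurry g)
      ((univ : Set (ℝ × (Fin m → ℝ))) ×ˢ (univ : Set ℝ)) := by
    apply ContDiff.contDiffOn
    have h1 : ContDiff ℝ (⊤ : ℕ∞) (fun q : (ℝ × (Fin m → ℝ)) × ℝ => ψ q.2) :=
      ψ.contDiff.comp contDiff_snd
    have h2 : ContDiff ℝ (⊤ : ℕ∞) (fun q : (ℝ × (Fin m → ℝ)) × ℝ =>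
        (ft q.1.2 + (-q.2) * (q.1.1 - ft q.1.2), q.1.2)) := by
      refine ContDiff.prodMk ?_ (contDiff_snd.comp contDiff_fst)
      have hftc : ContDiff ℝ (⊤ : ℕ∞) (fun q : (ℝ × (Fin m → ℝ)) × ℝ => ft q.1.2) :=
        hft.comp (contDiff_snd.comp contDiff_fst)
      exact hftc.add ((contDiff_snd.neg).mul
        ((contDiff_fst.comp contDiff_fst).sub hftc))
    exact h1.mul (hD2s.comp h2)
  have hQs : ContDiff ℝ (⊤ : ℕ∞) Q := by
    have := contDiffOn_convolution_right_with_param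
      (L := ContinuousLinearMap.mul ℝ ℝ) (μ := volume)
      (s := (univ : Set (ℝ × (Fin m → ℝ)))) (k := closedBall (0:ℝ) 3)
      isOpen_univ (isCompact_closedBall 0 3) hgsupp hφint hgsmooth
    have h2 : ContDiff ℝ (⊤ : ℕ∞)
        (fun q : (ℝ × (Fin m → ℝ)) × ℝ => (φ ⋆[ContinuousLinearMap.mul ℝ ℝ, volume] g q.1) q.2) := by
      rw [← contDiffOn_univ]
      simpa [Set.univ_prod_univ] using this
    exact h2.comp (contDiff_id.prodMk contDiff_const)
  -- Q as an interval integral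
  have hQint : ∀ (t : ℝ) (w : Fin m → ℝ), Q (t, w) = ∫ s in (0:ℝ)..1,
      (1 - s) * D2 (ft w + s * (t - ft w), w) := by
    intro t w
    set p : ℝ × (Fin m → ℝ) := (t, w) with hp
    show Q p = ∫ s in (0:ℝ)..1, (1 - s) * D2 (ft p.2 + s * (p.1 - ft p.2), p.2)
    have hQp : Q p = (φ ⋆[ContinuousLinearMap.mul ℝ ℝ, volume] g p) 0 := rfl
    rw [hQp, MeasureTheory.convolution_def]
    have step1 : ∀ s : ℝ, (ContinuousLinearMap.mul ℝ ℝ) (φ s) (g p (0 - s)) =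
        (Set.Ioc (0:ℝ) 1).indicator (fun s => (1 - s) * g p (-s)) s := by
      intro s
      simp only [ContinuousLinearMap.mul_apply', hφ, zero_sub]
      rw [Set.indicator_mul_left]
    simp only [step1]
    rw [MeasureTheory.integral_indicator measurableSet_Ioc]
    rw [intervalIntegral.integral_of_le zero_le_one]
    refine MeasureTheory.setIntegral_congr_fun measurableSet_Ioc ?_
    intro s hs
    have hψ1 : ψ (-s) = 1 := by
      apply ψ.one_of_mem_closedBall
      simp only [mem_closedBall, dist_zero_right, norm_neg, Real.norm_eq_abs,
        abs_of_pos hs.1]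
      linarith [hs.2]
    simp only [hg, hψ1, one_mul, neg_neg]
  -- choose neighborhoods
  obtain ⟨ε₁, hε₁, hball₁⟩ :
      ∃ ε > 0, ∀ q ∈ ball c0 ε, G q = F q :=
    Metric.eventually_nhds_iff_ball.1 hGF
  obtain ⟨ε₂, hε₂, hball₂⟩ : ∃ ε > 0, closedBall c0 ε ⊆ W :=
    (Metric.nhds_basis_closedBall.mem_iff).1 (hW.mem_nhds hmem)
  have hfc : ContinuousAt f wb :=
    (hf.continuousOn.continuousAt (hU₂.mem_nhds hwb))
  have hev : ∀ᶠ w in nhds wb,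
      ft w = f w ∧ deriv (fun t => F (t, w)) (f w) = 0 ∧ w ∈ U₂ ∧
        |f w - f wb| < ε₁ / 2 := by
    have h4 : ∀ᶠ w in nhds wb, |f w - f wb| < ε₁ / 2 := by
      have := hfc (Metric.ball_mem_nhds (f wb) (by linarith : (0:ℝ) < ε₁ / 2))
      filter_upwards [this] with w hw
      simpa [Real.dist_eq] using hw
    filter_upwards [hftf, hcrit, hU₂.mem_nhds hwb, h4] with w h1 h2 h3 h4
    exact ⟨h1, h2, h3, h4⟩
  obtain ⟨δ, hδ, hballδ⟩ : ∃ δ > 0, ∀ w ∈ ball wb δ,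
      ft w = f w ∧ deriv (fun t => F (t, w)) (f w) = 0 ∧ w ∈ U₂ ∧
        |f w - f wb| < ε₁ / 2 :=
    Metric.eventually_nhds_iff_ball.1 hev
  set r : ℝ := min (min δ ε₂) (ε₁ / 2) with hr
  have hrpos : 0 < r := lt_min (lt_min hδ hε₂) (by linarith)
  have hrδ : r ≤ δ := le_trans (min_le_left _ _) (min_le_left _ _)
  have hrε₂ : r ≤ ε₂ := le_trans (min_le_left _ _) (min_le_right _ _)
  have hrε₁ : r ≤ ε₁ / 2 := min_le_right _ _
  refine ⟨ball c0 r, ball wb δ, Q, fun w => G (ft w, w), isOpen_ball,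
    mem_ball_self hrpos, ?_, isOpen_ball, mem_ball_self hδ,
    fun w hw => (hballδ w hw).2.2.1, hQs.contDiffOn, ?_, ?_⟩
  · exact fun q hq => hball₂ (closedBall_subset_closedBall hrε₂
      (ball_subset_closedBall hq))
  · exact (hG.comp ((hft.prodMk contDiff_id))).contDiffOn
  · rintro ⟨t, w⟩ hq
    have hdist : dist (t, w) c0 < r := mem_ball.1 hq
    have hdw : dist w wb < r := by
      have h' := hdist
      rw [Prod.dist_eq] at h'
      exact lt_of_le_of_lt (le_max_right _ _) h'
    have hwδ : w ∈ ball wb δ := mem_ball.2 (lt_of_lt_of_le hdw hrδ)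
    obtain ⟨hftw, hcritw, hwU, hfw⟩ := hballδ w hwδ
    -- the point (f w, w) is in the ball of radius ε₁ where G = F
    have hGFw : ∀ t' ∈ ball (f w) (ε₁ / 2), G (t', w) = F (t', w) := by
      intro t' ht'
      apply hball₁
      rw [mem_ball, Prod.dist_eq]
      apply max_lt
      · calc dist t' (f wb) ≤ dist t' (f w) + dist (f w) (f wb) := dist_triangle _ _ _
          _ < ε₁ / 2 + ε₁ / 2 := by
              apply add_lt_add (mem_ball.1 ht')
              simpa [Real.dist_eq] using hfw
          _ = ε₁ := by ring
      · exact lt_of_lt_of_le hdw (by linarith)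
    -- D1 at (f w, w) equals the t-derivative of F, which vanishes
    have hD1w : D1 (f w, w) = 0 := by
      have hderG : HasDerivAt (fun t' => G (t', w)) (D1 (f w, w)) (f w) := by
        have hfd := (hG.differentiable (by simp) (f w, w)).hasFDerivAt
        have hcurve : HasDerivAt (fun t' : ℝ => ((t' : ℝ), w)) ((1:ℝ), (0:(Fin m → ℝ))) (f w) :=
          (hasDerivAt_id (f w)).prodMk (hasDerivAt_const _ w)
        exact hfd.comp_hasDerivAt _ hcurve
      have heq : (fun t' => G (t', w)) =ᶠ[nhds (f w)] (fun t' => F (t', w)) := by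
        filter_upwards [Metric.ball_mem_nhds (f w) (by linarith : (0:ℝ) < ε₁/2)] with t' ht'
        exact hGFw t' ht'
      have := hderG.deriv
      rw [heq.deriv_eq] at this
      rw [← this, hcritw]
    -- Taylor expansion
    have htay : G (t, w) = G (f w, w) + (t - f w) * D1 (f w, w) +
        (t - f w) ^ 2 * ∫ s in (0:ℝ)..1, (1 - s) * D2 (f w + s * (t - f w), w) := by
      have h := taylor_quad G hG (f w) t w
      exact h
    have hGt : G (t, w) = F (t, w) := by
      apply hball₁
      exact mem_ball.2 (lt_of_lt_of_le hdist (by linarith))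
    have hQp' : Q (t, w) = ∫ s in (0:ℝ)..1, (1 - s) * D2 (f w + s * (t - f w), w) := by
      have h := hQint t w
      rw [hftw] at h
      exact h
    show F (t, w) = (t - f w) ^ 2 * Q (t, w) + G (ft w, w)
    rw [hftw, ← hGt, htay, hD1w, hQp']
    ring
end

section
/- Let U₂ be an open neighborhood of w̄ in ℝ^{n−1}, f : U₂ → ℝ a C^∞ function, and F a real-valued C^∞ function on an open neighborhood of (f(w̄), w̄) in ℝ × ℝ^{n−1} such that ∂F/∂t(f(w), w) = 0 and ∂²F/∂t²(f(w), w) = 0 for every w near w̄ (where t denotes the first variable). Then there exist an open neighborhood N of (f(w̄), w̄), an open neighborhood U₂′ ⊆ U₂ of w̄, a C^∞ function Q on N, and a C^∞ function k on U₂′ such that F(t, w) = (t − f(w))³·Q(t, w) + k(w) for all (t, w) ∈ N. -/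
set_option maxHeartbeats 1000000
set_option synthInstance.maxHeartbeats 200000

open MeasureTheory Metric Set Filter
open scoped Topology Interval ContDiff Manifold

variable {E : Type} [NormedAddCommGroup E] [NormedSpace ℝ E] [FiniteDimensional ℝ E]

private lemma hasFDerivAt_param {G : Type} [NormedAddCommGroup G] [NormedSpace ℝ G]
    [CompleteSpace G] (φ : E × ℝ → G) (hφ : ContDiff ℝ (⊤ : ℕ∞) φ) (x₀ : E) :
    HasFDerivAt (fun x => ∫ s in (0:ℝ)..1, φ (x, s))
      (∫ s in (0:ℝ)..1, (fderiv ℝ φ (x₀, s)).comp (ContinuousLinearMap.inl ℝ E ℝ)) x₀ := by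
  set ψ : E × ℝ → (E →L[ℝ] G) := fun p => (fderiv ℝ φ p).comp (ContinuousLinearMap.inl ℝ E ℝ)
    with hψdef
  have hψ : Continuous ψ := by
    have h1 : ContDiff ℝ (⊤ : ℕ∞) (fderiv ℝ φ) := hφ.fderiv_right (by simp)
    exact (h1.clm_comp contDiff_const).continuous
  have hK : IsCompact ((closedBall x₀ 1) ×ˢ (Icc (0:ℝ) 1)) :=
    (isCompact_closedBall x₀ 1).prod isCompact_Icc
  obtain ⟨C, hC⟩ := hK.exists_bound_of_continuousOn hψ.continuousOn
  have h := intervalIntegral.hasFDerivAt_integral_of_dominated_of_fderiv_le (𝕜 := ℝ)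
      (F := fun x s => φ (x, s)) (F' := fun x s => ψ (x, s)) (x₀ := x₀)
      (bound := fun _ => C) (a := 0) (b := 1) (μ := volume) (ball_mem_nhds x₀ one_pos)
      (Eventually.of_forall fun x =>
        ((show Continuous fun s => φ (x, s) from hφ.continuous.comp' (continuous_const.prodMk continuous_id)).aestronglyMeasurable))
      ((show Continuous fun s => φ (x₀, s) from hφ.continuous.comp' (continuous_const.prodMk continuous_id)).intervalIntegrable 0 1)
      ((show Continuous fun s => ψ (x₀, s) from hψ.comp' (continuous_const.prodMk continuous_id)).aestronglyMeasurable)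
      (ae_of_all _ fun s hs x hx => hC (x, s)
        ⟨ball_subset_closedBall hx, by
          rw [Set.uIoc_of_le (zero_le_one)] at hs; exact Ioc_subset_Icc_self hs⟩)
      (intervalIntegrable_const)
      (ae_of_all _ fun s _ x _ => by
        have h1 : HasFDerivAt φ (fderiv ℝ φ (x, s)) (x, s) :=
          (hφ.differentiable (by simp) (x, s)).hasFDerivAt
        exact h1.comp x (hasFDerivAt_prodMk_left x s))
  exact h

private lemma contDiff_param :
    ∀ (n : ℕ) {G : Type} [NormedAddCommGroup G] [NormedSpace ℝ G] [CompleteSpace G]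
      (φ : E × ℝ → G), ContDiff ℝ (⊤ : ℕ∞) φ →
      ContDiff ℝ (n : ℕ∞) (fun x => ∫ s in (0:ℝ)..1, φ (x, s)) := by
  intro n
  induction n with
  | zero =>
    intro G _ _ _ φ hφ
    exact contDiff_zero.2 (continuous_iff_continuousAt.2 fun x =>
      (hasFDerivAt_param φ hφ x).differentiableAt.continuousAt)
  | succ n ih =>
    intro G _ _ _ φ hφ
    have key : ∀ x : E, HasFDerivAt (fun x => ∫ s in (0:ℝ)..1, φ (x, s))
        (∫ s in (0:ℝ)..1, (fderiv ℝ φ (x, s)).comp (ContinuousLinearMap.inl ℝ E ℝ)) x :=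
      hasFDerivAt_param φ hφ
    have main : ContDiff ℝ ((n : WithTop ℕ∞) + 1) (fun x => ∫ s in (0:ℝ)..1, φ (x, s)) := by
      rw [contDiff_succ_iff_fderiv]
      refine ⟨fun x => (key x).differentiableAt, ?_, ?_⟩
      · intro h
        exact absurd h (by exact_mod_cast WithTop.natCast_ne_top n)
      · have heq : fderiv ℝ (fun x => ∫ s in (0:ℝ)..1, φ (x, s)) =
            fun x => ∫ s in (0:ℝ)..1,
              (fderiv ℝ φ (x, s)).comp (ContinuousLinearMap.inl ℝ E ℝ) :=
          funext fun x => (key x).fderiv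
        rw [heq]
        have hψ : ContDiff ℝ (⊤ : ℕ∞)
            (fun p : E × ℝ => (fderiv ℝ φ p).comp (ContinuousLinearMap.inl ℝ E ℝ)) :=
          (hφ.fderiv_right (by simp)).clm_comp contDiff_const
        exact_mod_cast ih _ hψ
    exact_mod_cast main

private lemma extend_smooth {g : E → ℝ} {W K : Set E} (hW : IsOpen W) (hK : IsCompact K)
    (hKW : K ⊆ W) (hg : ContDiffOn ℝ (⊤ : ℕ∞) g W) :
    ∃ gt : E → ℝ, ContDiff ℝ (⊤ : ℕ∞) gt ∧ ∀ x ∈ K, gt x = g x := by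
  obtain ⟨χ, hχ0, hχ1, -⟩ := exists_contMDiffMap_zero_one_nhds_of_isClosed 𝓘(ℝ, E) (n := (⊤ : ℕ∞))
    hW.isClosed_compl hK.isClosed (disjoint_left.2 fun x hx hxK => hx (hKW hxK))
  have hχ : ContDiff ℝ (⊤ : ℕ∞) χ := contMDiff_iff_contDiff.1 χ.contMDiff
  obtain ⟨O, hOopen, hOsub, hO⟩ := eventually_nhdsSet_iff_exists.1 hχ0
  classical
  refine ⟨fun x => if x ∈ W then χ x * g x else 0, ?_, fun x hx => ?_⟩
  · rw [contDiff_iff_contDiffAt]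
    intro x
    by_cases hx : x ∈ W
    · refine (ContDiffAt.mul hχ.contDiffAt (hg.contDiffAt (hW.mem_nhds hx))).congr_of_eventuallyEq ?_
      filter_upwards [hW.mem_nhds hx] with y hy
      simp only [if_pos hy]
    · refine contDiffAt_const (c := 0) |>.congr_of_eventuallyEq ?_
      filter_upwards [hOopen.mem_nhds (hOsub hx)] with y hy
      by_cases hyW : y ∈ W <;> simp only [if_pos, if_neg, hyW, hO y hy, zero_mul, if_true, if_false]
  · simp only [if_pos (hKW hx), hχ1.self_of_nhdsSet x hx, one_mul]



/-!
Statement 12: the cubic division lemma (intermediate claim in the proof of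
Theorem 3.6): if `∂F/∂t` and `∂²F/∂t²` vanish along the graph `t = f(w)`, then
`F(t,w) = (t - f(w))³ Q(t,w) + k(w)` near `(f(w̄), w̄)`.
-/

theorem cubic_division_lemma {m : ℕ} (wb : Fin m → ℝ)
    (U₂ : Set (Fin m → ℝ)) (hU₂ : IsOpen U₂) (hwb : wb ∈ U₂)
    (f : (Fin m → ℝ) → ℝ) (hf : ContDiffOn ℝ (⊤ : ℕ∞) f U₂)
    (F : ℝ × (Fin m → ℝ) → ℝ)
    (W : Set (ℝ × (Fin m → ℝ))) (hW : IsOpen W) (hmem : (f wb, wb) ∈ W)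
    (hF : ContDiffOn ℝ (⊤ : ℕ∞) F W)
    (hcrit : ∀ᶠ w in nhds wb, deriv (fun t => F (t, w)) (f w) = 0 ∧
      deriv (deriv (fun t => F (t, w))) (f w) = 0) :
    ∃ (N : Set (ℝ × (Fin m → ℝ))) (U₂' : Set (Fin m → ℝ))
      (Q : ℝ × (Fin m → ℝ) → ℝ) (k : (Fin m → ℝ) → ℝ),
      IsOpen N ∧ (f wb, wb) ∈ N ∧ N ⊆ W ∧
      IsOpen U₂' ∧ wb ∈ U₂' ∧ U₂' ⊆ U₂ ∧
      ContDiffOn ℝ (⊤ : ℕ∞) Q N ∧ ContDiffOn ℝ (⊤ : ℕ∞) k U₂' ∧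
      ∀ q ∈ N, F q = (q.1 - f q.2) ^ 3 * Q q + k q.2 := by
  classical
  -- partial derivatives in the first variable
  set g1 : ℝ × (Fin m → ℝ) → ℝ := fun p => fderiv ℝ F p (1, 0) with hg1def
  have hg1 : ContDiffOn ℝ (⊤ : ℕ∞) g1 W :=
    (hF.fderiv_of_isOpen hW (by simp)).clm_apply contDiffOn_const
  set g2 : ℝ × (Fin m → ℝ) → ℝ := fun p => fderiv ℝ g1 p (1, 0) with hg2def
  have hg2 : ContDiffOn ℝ (⊤ : ℕ∞) g2 W :=
    (hg1.fderiv_of_isOpen hW (by simp)).clm_apply contDiffOn_const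
  set g3 : ℝ × (Fin m → ℝ) → ℝ := fun p => fderiv ℝ g2 p (1, 0) with hg3def
  have hg3 : ContDiffOn ℝ (⊤ : ℕ∞) g3 W :=
    (hg2.fderiv_of_isOpen hW (by simp)).clm_apply contDiffOn_const
  -- one-variable derivative facts
  have hder1 : ∀ (G : ℝ × (Fin m → ℝ) → ℝ), ContDiffOn ℝ (⊤ : ℕ∞) G W →
      ∀ (t₀ : ℝ) (w₀ : Fin m → ℝ), (t₀, w₀) ∈ W →
      HasDerivAt (fun t' => G (t', w₀)) (fderiv ℝ G (t₀, w₀) (1, 0)) t₀ := by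
    intro G hG t₀ w₀ hp
    have h1 : HasFDerivAt G (fderiv ℝ G (t₀, w₀)) (t₀, w₀) :=
      ((hG.differentiableOn (by simp)).differentiableAt (hW.mem_nhds hp)).hasFDerivAt
    have h2 : HasDerivAt (fun t' : ℝ => (t', w₀)) ((1 : ℝ), (0 : Fin m → ℝ)) t₀ :=
      (hasDerivAt_id t₀).prodMk (hasDerivAt_const t₀ w₀)
    exact h1.comp_hasDerivAt t₀ h2
  have hder2 : ∀ (G : ℝ × (Fin m → ℝ) → ℝ), ContDiffOn ℝ (⊤ : ℕ∞) G W →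
      ∀ (a u : ℝ) (w : Fin m → ℝ) (s : ℝ), (a + s * u, w) ∈ W →
      HasDerivAt (fun s' : ℝ => G (a + s' * u, w))
        (u * fderiv ℝ G (a + s * u, w) (1, 0)) s := by
    intro G hG a u w s hp
    have h1 : HasFDerivAt G (fderiv ℝ G (a + s * u, w)) (a + s * u, w) :=
      ((hG.differentiableOn (by simp)).differentiableAt (hW.mem_nhds hp)).hasFDerivAt
    have h2 : HasDerivAt (fun s' : ℝ => ((a + s' * u : ℝ), w)) ((u : ℝ), (0 : Fin m → ℝ)) s := by
      simpa using (((hasDerivAt_id s).mul_const u).const_add a).prodMk (hasDerivAt_const s w)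
    have h3 := h1.comp_hasDerivAt s h2
    have h4 : ((u : ℝ), (0 : Fin m → ℝ)) = u • ((1 : ℝ), (0 : Fin m → ℝ)) := by simp
    have h5 : fderiv ℝ G (a + s * u, w) ((u : ℝ), (0 : Fin m → ℝ)) =
        u * fderiv ℝ G (a + s * u, w) (1, 0) := by
      rw [h4, ContinuousLinearMap.map_smul, smul_eq_mul]
    rw [← h5]
    exact h3
  -- choice of radii
  obtain ⟨δ₀, hδ₀pos, hδ₀⟩ := Metric.isOpen_iff.1 hW (f wb, wb) hmem
  set ρ : ℝ := δ₀ / 2 with hρdef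
  have hρpos : 0 < ρ := by positivity
  have hfc : ContinuousAt f wb := hf.continuousOn.continuousAt (hU₂.mem_nhds hwb)
  have hev : ∀ᶠ w in nhds wb, (deriv (fun t => F (t, w)) (f w) = 0 ∧
      deriv (deriv (fun t => F (t, w))) (f w) = 0) ∧ w ∈ U₂ ∧ dist (f w) (f wb) < ρ := by
    filter_upwards [hcrit, hU₂.mem_nhds hwb,
      hfc (Metric.ball_mem_nhds (f wb) hρpos)] with w h1 h2 h3
    exact ⟨h1, h2, h3⟩
  obtain ⟨δ', hδ'pos, hδ'⟩ := Metric.eventually_nhds_iff_ball.1 hev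
  set r : ℝ := min (δ' / 2) (δ₀ / 2) with hrdef
  have hrpos : 0 < r := by positivity
  have hrδ' : ∀ w ∈ Metric.closedBall wb r, w ∈ Metric.ball wb δ' := fun w hw =>
    Metric.mem_ball.2 (lt_of_le_of_lt (Metric.mem_closedBall.1 hw)
      (lt_of_le_of_lt (min_le_left _ _) (by linarith)))
  have hrδ₀ : ∀ w ∈ Metric.closedBall wb r, w ∈ Metric.ball wb δ₀ := fun w hw =>
    Metric.mem_ball.2 (lt_of_le_of_lt (Metric.mem_closedBall.1 hw)
      (lt_of_le_of_lt (min_le_right _ _) (by linarith)))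
  -- the key compact set
  set K : Set (ℝ × (Fin m → ℝ)) :=
    Metric.closedBall (f wb) ρ ×ˢ Metric.closedBall wb r with hKdef
  have hKW : K ⊆ W := by
    intro p hp
    apply hδ₀
    rw [← ball_prod_same]
    exact ⟨Metric.mem_ball.2 (lt_of_le_of_lt (Metric.mem_closedBall.1 hp.1) (by
      rw [hρdef]; linarith)), hrδ₀ p.2 hp.2⟩
  have hKcpt : IsCompact K := (isCompact_closedBall _ _).prod (isCompact_closedBall _ _)
  have hBU₂ : Metric.closedBall wb r ⊆ U₂ := fun w hw => (hδ' w (hrδ' w hw)).2.1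
  -- global smooth extensions
  obtain ⟨ft, hft, hfteq⟩ := extend_smooth hU₂ (isCompact_closedBall wb r) hBU₂ hf
  obtain ⟨g3t, hg3t, hg3teq⟩ := extend_smooth hW hKcpt hKW hg3
  -- the parametric integrand and Q
  set Φ : (ℝ × (Fin m → ℝ)) × ℝ → ℝ := fun q =>
    (1 - q.2) ^ 2 / 2 * g3t (ft q.1.2 + q.2 * (q.1.1 - ft q.1.2), q.1.2) with hΦdef
  have hinner : ContDiff ℝ (⊤ : ℕ∞) (fun q : (ℝ × (Fin m → ℝ)) × ℝ =>
      ((ft q.1.2 + q.2 * (q.1.1 - ft q.1.2) : ℝ), q.1.2)) := by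
    have c1 : ContDiff ℝ (⊤ : ℕ∞) (fun q : (ℝ × (Fin m → ℝ)) × ℝ => ft q.1.2) :=
      hft.comp (contDiff_snd.comp contDiff_fst)
    exact (c1.add (contDiff_snd.mul ((contDiff_fst.comp contDiff_fst).sub c1))).prodMk
      (contDiff_snd.comp contDiff_fst)
  have hΦ : ContDiff ℝ (⊤ : ℕ∞) Φ :=
    ((((contDiff_const.sub contDiff_snd).pow 2).div_const 2).mul (hg3t.comp hinner))
  set Q : ℝ × (Fin m → ℝ) → ℝ := fun p => ∫ s in (0:ℝ)..1, Φ (p, s) with hQdef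
  have hQ : ContDiff ℝ (⊤ : ℕ∞) Q := by
    rw [show ((⊤ : ℕ∞) : WithTop ℕ∞) = ∞ from rfl, contDiff_infty]
    intro n
    exact_mod_cast contDiff_param n Φ hΦ
  -- the sets and k
  refine ⟨Metric.ball (f wb) ρ ×ˢ Metric.ball wb r, Metric.ball wb r, Q,
    fun w => F (f w, w), (Metric.isOpen_ball).prod Metric.isOpen_ball,
    ⟨Metric.mem_ball_self hρpos, Metric.mem_ball_self hrpos⟩,
    fun p hp => hKW ⟨Metric.ball_subset_closedBall hp.1, Metric.ball_subset_closedBall hp.2⟩,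
    Metric.isOpen_ball, Metric.mem_ball_self hrpos,
    fun w hw => hBU₂ (Metric.ball_subset_closedBall hw), hQ.contDiffOn, ?_, ?_⟩
  · -- smoothness of k
    refine hF.comp (((hf.mono (fun w hw => hBU₂ (Metric.ball_subset_closedBall hw))).prodMk
      contDiffOn_id)) ?_
    intro w hw
    exact hKW ⟨Metric.ball_subset_closedBall (Metric.mem_ball.2 (hδ' w (hrδ'
      w (Metric.ball_subset_closedBall hw))).2.2), Metric.ball_subset_closedBall hw⟩
  · -- the identity
    rintro ⟨t, w⟩ hq
    obtain ⟨ht, hw⟩ := hq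
    have hwcb : w ∈ Metric.closedBall wb r := Metric.ball_subset_closedBall hw
    obtain ⟨hcritw, hwU₂, hfw⟩ := hδ' w (hrδ' w hwcb)
    have ha : f w ∈ Metric.ball (f wb) ρ := Metric.mem_ball.2 hfw
    have hseg : ∀ s ∈ Set.Icc (0:ℝ) 1, (f w + s * (t - f w), w) ∈ K := by
      intro s hs
      have h1 := (convex_ball (f wb) ρ).add_smul_sub_mem ha ht hs
      rw [smul_eq_mul] at h1
      exact ⟨Metric.ball_subset_closedBall h1, hwcb⟩
    have hsegW : ∀ s ∈ Set.Icc (0:ℝ) 1, (f w + s * (t - f w), w) ∈ W :=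
      fun s hs => hKW (hseg s hs)
    have haK : (f w, w) ∈ K := ⟨Metric.ball_subset_closedBall ha, hwcb⟩
    have haW : (f w, w) ∈ W := hKW haK
    have hftw : ft w = f w := hfteq w hwcb
    set G : ℝ → ℝ := fun s => F (f w + s * (t - f w), w)
      + (1 - s) * (t - f w) * g1 (f w + s * (t - f w), w)
      + (1 - s) ^ 2 / 2 * (t - f w) ^ 2 * g2 (f w + s * (t - f w), w) with hGdef
    have hG : ∀ s ∈ Set.uIcc (0:ℝ) 1, HasDerivAt G ((t - f w) ^ 3 * Φ ((t, w), s)) s := by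
      intro s hs
      rw [Set.uIcc_of_le zero_le_one] at hs
      have hp : (f w + s * (t - f w), w) ∈ W := hsegW s hs
      have A := hder2 F hF (f w) (t - f w) w s hp
      have B := hder2 g1 hg1 (f w) (t - f w) w s hp
      have C := hder2 g2 hg2 (f w) (t - f w) w s hp
      have D1 : HasDerivAt (fun s' : ℝ => (1 - s') * (t - f w)) (-(t - f w)) s := by
        simpa using ((hasDerivAt_const s (1:ℝ)).sub (hasDerivAt_id s)).mul_const (t - f w)
      have D2 : HasDerivAt (fun s' : ℝ => (1 - s') ^ 2 / 2 * (t - f w) ^ 2)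
          (-((1 - s) * (t - f w) ^ 2)) s := by
        have h0 := ((((hasDerivAt_const s (1:ℝ)).sub (hasDerivAt_id s)).pow 2).div_const
          2).mul_const ((t - f w) ^ 2)
        refine h0.congr_deriv ?_
        simp only [Pi.sub_apply, id_eq]
        ring
      have total := (A.add (D1.mul B)).add (D2.mul C)
      have hΦval : Φ ((t, w), s) = (1 - s) ^ 2 / 2 * g3 (f w + s * (t - f w), w) := by
        simp only [hΦdef, hftw]
        rw [hg3teq _ (hseg s hs)]
      rw [hΦval]
      refine total.congr_deriv ?_
      simp only [hg1def, hg2def, hg3def]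
      ring
    have hcontΦ : Continuous fun s => Φ ((t, w), s) :=
      hΦ.continuous.comp' (continuous_const.prodMk continuous_id)
    have hInt : IntervalIntegrable (fun s => (t - f w) ^ 3 * Φ ((t, w), s))
        MeasureTheory.volume 0 1 := (continuous_const.mul hcontΦ).intervalIntegrable 0 1
    have hsum := intervalIntegral.integral_eq_sub_of_hasDerivAt hG hInt
    rw [intervalIntegral.integral_const_mul] at hsum
    have hg1z : g1 (f w, w) = 0 := by
      have h1 := (hder1 F hF (f w) w haW).deriv
      rw [hg1def]
      show fderiv ℝ F (f w, w) (1, 0) = 0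
      rw [← h1]
      exact hcritw.1
    have hg2z : g2 (f w, w) = 0 := by
      have heq : (deriv fun t' => F (t', w)) =ᶠ[nhds (f w)] fun t' => g1 (t', w) := by
        have hop : IsOpen {t' : ℝ | (t', w) ∈ W} :=
          hW.preimage (continuous_id.prodMk continuous_const)
        filter_upwards [hop.mem_nhds (show f w ∈ {t' : ℝ | (t', w) ∈ W} from haW)]
          with t' ht'
        rw [(hder1 F hF t' w ht').deriv]
      have h2 := heq.deriv_eq
      have h3 := (hder1 g1 hg1 (f w) w haW).deriv
      rw [hg2def]
      show fderiv ℝ g1 (f w, w) (1, 0) = 0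
      rw [← h3, ← h2]
      exact hcritw.2
    have hG1 : G 1 = F (t, w) := by
      simp only [hGdef]
      rw [show f w + 1 * (t - f w) = t by ring]
      ring
    have hG0 : G 0 = F (f w, w) := by
      simp only [hGdef]
      rw [show f w + 0 * (t - f w) = f w by ring, hg1z, hg2z]
      ring
    rw [hG1, hG0] at hsum
    show F (t, w) = (t - f w) ^ 3 * Q (t, w) + F (f w, w)
    rw [hQdef]
    simp only []
    linarith [hsum]
end
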